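/- arXiv:1606.05379 — 7 statements merged into one kernel-verified Lean document; each statement's English description precedes it below -/
import Mathlib

section
/- If a normal topological space X is the union of a sequence of open subsets U_1, U_2, U_3, ... such that for each n ≥ 1, the closure of U_n is contained in U_{n+1} and U_n contracts to a point in U_{n+1} (i.e., the inclusion U_n ↪ U_{n+1} is homotopic to a constant map), then X is contractible. -/
open unitInterval Set Filter Topology

noncomputable section MonotoneUnionProof

namespace MonotoneUnionProof

variable {X : Type*} [TopologicalSpace X]

/-- the triangle map: out-and-back time profile. -/
def tri (a : ℝ) : ℝ := min (2*a) (2 - 2*a)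

lemma tri_zero : tri 0 = 0 := by norm_num [tri]
lemma tri_one : tri 1 = 0 := by norm_num [tri]
lemma tri_cont : Continuous tri := (continuous_const.mul continuous_id).min
  (continuous_const.sub (continuous_const.mul continuous_id))

/-- All the data/hypotheses we need. `fe k x t` is a damped contraction of `U k` inside
`U (k+1)` (time clamped to `[0,1]`, junk value `x` outside `U k`), `w n` are Urysohn ramp
functions for slab `n`, and `p` the common base point. -/
structure Hyp (U : ℕ → Set X) (fe : ℕ → X → ℝ → X) (w : ℕ → X → ℝ) (p : X) : Prop where
  hUo : ∀ n, IsOpen (U n)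
  hUc : ∀ n, closure (U n) ⊆ U (n+1)
  hp : p ∈ U 1
  hfe0 : ∀ k (x : X) (t : ℝ), t ≤ 0 → fe k x t = x
  hfem : ∀ k (x : X) (t : ℝ), x ∈ U k → fe k x t ∈ U (k+1)
  hfe1 : ∀ k (x y : X), x ∈ U k → y ∈ U k → fe k x 1 = fe k y 1
  hfen : ∀ k (x : X) (t : ℝ), x ∉ U k → fe k x t = x
  hfec : ∀ k, ContinuousOn (fun q : X × ℝ => fe k q.1 q.2) ((U k) ×ˢ (univ : Set ℝ))
  hwc : ∀ n, Continuous (w n)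
  hw01 : ∀ n x, w n x ∈ Icc (0:ℝ) 1
  hw1 : ∀ n x, x ∈ closure (U (6*n)) → (2 ≤ n → x ∉ U (6*n-6)) → w n x = 1
  hw0 : ∀ n x, ((2 ≤ n ∧ x ∈ closure (U (6*n-7))) ∨ x ∉ U (6*n+1)) → w n x = 0

variable (U : ℕ → Set X) (fe : ℕ → X → ℝ → X) (w : ℕ → X → ℝ) (p : X)

/-- The repair zone for slab `n` (inner collar of slab `n-1`). -/
def EZ (n : ℕ) : Set X := if 3 ≤ n then closure (U (6*n-12)) \ U (6*n-13) else ∅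

open Classical in
/-- The slab-`n` homotopy, given the map `rn` reached so far. -/
def slab (n : ℕ) (rn : X → X) (x : X) (s : ℝ) : X :=
  if x ∈ EZ U n then fe (6*n-4) p (tri (w (n-1) x) * (1 - s))
  else if s * w n x ≤ 1/2 then fe (6*n+2) (rn x) (2 * (s * w n x))
  else fe (6*n+2) p (2 - 2 * (s * w n x))

/-- The map reached after `n` slabs. -/
def r : ℕ → X → X
  | 0 => id
  | n+1 => fun x => slab U fe w p n (r n) x 1

/-- The slab-`n` homotopy. -/
def Phi (n : ℕ) (x : X) (s : ℝ) : X := slab U fe w p n (r U fe w p n) x s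

lemma Phi_one (n : ℕ) (x : X) : Phi U fe w p n x 1 = r U fe w p n.succ x := rfl

variable {U fe w p}

lemma EZ_mem {n : ℕ} {x : X} (h : x ∈ EZ U n) :
    3 ≤ n ∧ x ∈ closure (U (6*n-12)) ∧ x ∉ U (6*n-13) := by
  by_cases h3 : 3 ≤ n
  · simpa [EZ, h3] using And.intro h3 (by simpa [EZ, h3] using h)
  · simp [EZ, h3] at h

lemma EZ_empty {n : ℕ} (h : ¬ 3 ≤ n) : EZ U n = (∅ : Set X) := by simp [EZ, h]

namespace Hyp

variable (hh : Hyp U fe w p)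
include hh

lemma Umono {m n : ℕ} (h : m ≤ n) : U m ⊆ U n := by
  induction h with
  | refl => exact subset_rfl
  | step _ ih => exact ih.trans (subset_closure.trans (hh.hUc _))

lemma Umono' {m n : ℕ} (h : m ≤ n) : U m ⊆ closure (U n) :=
  (hh.Umono h).trans subset_closure

lemma Uclmono {m n : ℕ} (h : m + 1 ≤ n) : closure (U m) ⊆ U n :=
  (hh.hUc m).trans (hh.Umono h)

lemma pmem {n : ℕ} (h : 1 ≤ n) : p ∈ U n := hh.Umono h hh.hp

/-- Values of `r` : either untouched or in `U (6n)`. -/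
lemma rJ (n : ℕ) (x : X) : r U fe w p n x = x ∨ r U fe w p n x ∈ U (6*n) := by
  induction n with
  | zero => exact Or.inl rfl
  | succ n ih =>
    show slab U fe w p n (r U fe w p n) x 1 = x ∨
      slab U fe w p n (r U fe w p n) x 1 ∈ U (6*(n+1))
    rw [slab]
    split_ifs with hE hb
    · rcases EZ_mem hE with ⟨h3, -, -⟩
      exact Or.inr (hh.Umono (by omega) (hh.hfem _ _ _ (hh.pmem (by omega))))
    · rcases ih with h | h
      · rw [h]
        by_cases hx : x ∈ U (6*n+2)
        · exact Or.inr (hh.Umono (by omega) (hh.hfem _ _ _ hx))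
        · exact Or.inl (hh.hfen _ _ _ hx)
      · exact Or.inr (hh.Umono (by omega) (hh.hfem _ _ _ (hh.Umono (by omega) h)))
    · exact Or.inr (hh.Umono (by omega) (hh.hfem _ _ _ (hh.pmem (by omega))))

lemma rmem {n : ℕ} {x : X} (hx : x ∈ U (6*n+2)) : r U fe w p n x ∈ U (6*n+2) := by
  rcases hh.rJ n x with h | h
  · rwa [h]
  · exact hh.Umono (by omega) h

/-- Trichotomy for the Urysohn ramps. -/
lemma wcases (n : ℕ) (x : X) :
    w n x = 0 ∨ w n x = 1 ∨
      ((2 ≤ n ∧ x ∈ U (6*n-6) ∧ x ∉ closure (U (6*n-7))) ∨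
        (x ∈ U (6*n+1) ∧ x ∉ closure (U (6*n)))) := by
  by_cases h1 : x ∈ U (6*n+1)
  · by_cases h2 : x ∈ closure (U (6*n))
    · by_cases h3 : 2 ≤ n
      · by_cases h4 : x ∈ U (6*n-6)
        · by_cases h5 : x ∈ closure (U (6*n-7))
          · exact Or.inl (hh.hw0 n x (Or.inl ⟨h3, h5⟩))
          · exact Or.inr (Or.inr (Or.inl ⟨h3, h4, h5⟩))
        · exact Or.inr (Or.inl (hh.hw1 n x h2 fun _ => h4))
      · exact Or.inr (Or.inl (hh.hw1 n x h2 fun h => absurd h h3))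
    · exact Or.inr (Or.inr (Or.inr ⟨h1, h2⟩))
  · exact Or.inl (hh.hw0 n x (Or.inr h1))


/-- Core argument: a point of `U (6n)` outside the repair zone of slab `n+1` has been
sent to `p` by `r (n+1)`, provided the fundamental formula holds at level `n`. -/
lemma rp_core (n : ℕ) (x : X)
    (hC : x ∈ closure (U (6*n)) → r U fe w p (n+1) x = fe (6*n+2) p (tri (w n x)))
    (hx6 : x ∈ U (6*n)) (hE : x ∉ EZ U (n+1)) : r U fe w p (n+1) x = p := by
  rcases hh.wcases n x with hw' | hw' | hw'
  · rw [hC (subset_closure hx6), hw', tri_zero, hh.hfe0 _ p 0 le_rfl]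
  · rw [hC (subset_closure hx6), hw', tri_one, hh.hfe0 _ p 0 le_rfl]
  · exfalso
    rcases hw' with ⟨h2', hxin, hxout⟩ | ⟨hxin, hxout⟩
    · have h3 : 3 ≤ n+1 := by omega
      have e1 : 6*(n+1)-12 = 6*n-6 := by omega
      have e2 : 6*(n+1)-13 = 6*n-7 := by omega
      have hmem : x ∈ EZ U (n+1) ∨ x ∈ U (6*n-7) := by
        rw [EZ, if_pos h3, e1, e2]
        by_cases hq : x ∈ U (6*n-7)
        · exact Or.inr hq
        · exact Or.inl ⟨subset_closure hxin, hq⟩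
      rcases hmem with h | h
      · exact hE h
      · exact hxout (subset_closure h)
    · exact hxout (subset_closure hx6)

/-- The fundamental formula: on `closure (U (6n))`, the map `r (n+1)` is the point of the
canonical track of `p` at out-and-back time `w n x`. -/
lemma rC (n : ℕ) : ∀ x, x ∈ closure (U (6*n)) →
    r U fe w p (n+1) x = fe (6*n+2) p (tri (w n x)) := by
  induction n with
  | zero =>
    intro x hx
    have hE : x ∉ EZ U 0 := by simp [EZ]
    have hw' : w 0 x = 1 := hh.hw1 0 x (by simpa using hx) (by omega)
    show slab U fe w p 0 (r U fe w p 0) x 1 = _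
    rw [slab, if_neg hE, hw']
    norm_num [tri]
  | succ n ih =>
    intro x hx
    show slab U fe w p (n+1) (r U fe w p (n+1)) x 1 = _
    by_cases hE : x ∈ EZ U (n+1)
    · obtain ⟨h3, hcl, -⟩ := EZ_mem hE
      have hstep : closure (U (6*(n+1)-12)) ⊆ U (6*(n+1)-11) := hh.Uclmono (by omega)
      have hw0' : w (n+1) x = 0 := hh.hw0 (n+1) x
        (Or.inl ⟨by omega, hh.Umono' (by omega) (hstep hcl)⟩)
      rw [slab, if_pos hE, hw0', tri_zero]
      have e : tri (w ((n+1)-1) x) * (1 - 1) = 0 := by ring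
      rw [e, hh.hfe0 _ p 0 le_rfl, hh.hfe0 _ p 0 le_rfl]
    · rcases hh.wcases (n+1) x with hw' | hw' | hw'
      · have h1 : ¬ (2 ≤ n+1 → x ∉ U (6*(n+1)-6)) := by
          intro hcon
          have := hh.hw1 (n+1) x hx hcon
          rw [hw'] at this; norm_num at this
        push_neg at h1
        obtain ⟨h2, hxU⟩ := h1
        have hx6n : x ∈ U (6*n) := by
          have e : 6*(n+1)-6 = 6*n := by omega
          rwa [e] at hxU
        have hr : r U fe w p (n+1) x = p := hh.rp_core n x (ih x) hx6n hE
        rw [slab, if_neg hE, hw', hr]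
        norm_num [tri]
      · rw [slab, if_neg hE, hw']
        norm_num [tri]
      · rcases hw' with ⟨h2, hxin, hxout⟩ | ⟨hxin, hxout⟩
        · have hx6n : x ∈ U (6*n) := by
            have e : 6*(n+1)-6 = 6*n := by omega
            rwa [e] at hxin
          have hr : r U fe w p (n+1) x = p := hh.rp_core n x (ih x) hx6n hE
          rw [slab, if_neg hE, hr, one_mul]
          by_cases hb : w (n+1) x ≤ 1/2
          · rw [if_pos hb]
            congr 1
            rw [tri, min_eq_left (by linarith)]
          · rw [if_neg hb]
            congr 1
            rw [tri, min_eq_right (by push_neg at hb; linarith)]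
        · exact absurd hx hxout

lemma rP (n : ℕ) (x : X) (hx6 : x ∈ U (6*n)) (hE : x ∉ EZ U (n+1)) :
    r U fe w p (n+1) x = p :=
  hh.rp_core n x (hh.rC n x) hx6 hE

lemma Phi_zero (n : ℕ) (x : X) : Phi U fe w p n x 0 = r U fe w p n x := by
  rw [Phi, slab]
  by_cases hE : x ∈ EZ U n
  · rw [if_pos hE]
    obtain ⟨h3, hcl, -⟩ := EZ_mem hE
    obtain ⟨k, rfl⟩ : ∃ k, n = k + 1 := ⟨n-1, by omega⟩
    have hstep : closure (U (6*(k+1)-12)) ⊆ U (6*(k+1)-11) := hh.Uclmono (by omega)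
    have hxk : x ∈ closure (U (6*k)) := hh.Umono' (by omega) (hstep hcl)
    rw [hh.rC k x hxk]
    have e : 6*(k+1)-4 = 6*k+2 := by omega
    have e2 : (k+1) - 1 = k := by omega
    rw [e, e2]
    congr 1
    ring
  · rw [if_neg hE]
    rw [if_pos (by rw [zero_mul]; norm_num)]
    have e : 2 * ((0:ℝ) * w n x) = 0 := by ring
    rw [e, hh.hfe0 _ _ 0 le_rfl]

lemma Phi_stab (m n : ℕ) (x : X) (hx : x ∈ U m) (hmn : m + 3 ≤ n) (s : ℝ) :
    Phi U fe w p n x s = p := by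
  have hE : x ∉ EZ U n := by
    intro h
    obtain ⟨h3, -, hnot⟩ := EZ_mem h
    exact hnot (hh.Umono (by omega) hx)
  have hw' : w n x = 0 := hh.hw0 n x (Or.inl ⟨by omega, hh.Umono' (by omega) hx⟩)
  obtain ⟨k, rfl⟩ : ∃ k, n = k + 1 := ⟨n-1, by omega⟩
  have hEk : x ∉ EZ U (k+1) := hE
  have hr : r U fe w p (k+1) x = p :=
    hh.rP k x (hh.Umono (by omega) hx) hEk
  rw [Phi, slab, if_neg hE, hw']
  simp only [mul_zero]
  rw [if_pos (by norm_num), hh.hfe0 _ _ 0 le_rfl, hr]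


/-- Continuity of the main (non-repair) part of a slab. -/
lemma theta_cont (n : ℕ) (hr : Continuous (r U fe w p n)) :
    Continuous (fun q : X × ℝ =>
      if q.2 * w n q.1 ≤ 1/2 then fe (6*n+2) (r U fe w p n q.1) (2 * (q.2 * w n q.1))
      else fe (6*n+2) p (2 - 2 * (q.2 * w n q.1))) := by
  rw [continuous_iff_continuousAt]
  intro q₀
  by_cases hq : q₀.1 ∈ U (6*n+2)
  · have hO : (U (6*n+2)) ×ˢ (univ : Set ℝ) ∈ 𝓝 q₀ :=
      prod_mem_nhds ((hh.hUo _).mem_nhds hq) univ_mem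
    apply ContinuousOn.continuousAt _ hO
    rw [continuousOn_iff_continuous_restrict]
    show Continuous fun z : ((U (6*n+2)) ×ˢ (univ : Set ℝ) : Set (X × ℝ)) =>
      if z.1.2 * w n z.1.1 ≤ 1/2 then fe (6*n+2) (r U fe w p n z.1.1) (2 * (z.1.2 * w n z.1.1))
      else fe (6*n+2) p (2 - 2 * (z.1.2 * w n z.1.1))
    have hcw : Continuous fun z : ((U (6*n+2)) ×ˢ (univ : Set ℝ) : Set (X × ℝ)) =>
        z.1.2 * w n z.1.1 :=
      (continuous_snd.comp continuous_subtype_val).mul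
        ((hh.hwc n).comp (continuous_fst.comp continuous_subtype_val))
    apply Continuous.if_le
    · have hmap : Continuous (fun z : ((U (6*n+2)) ×ˢ (univ : Set ℝ) : Set (X × ℝ)) =>
          ((r U fe w p n z.1.1, 2 * (z.1.2 * w n z.1.1)) : X × ℝ)) :=
        (hr.comp (continuous_fst.comp continuous_subtype_val)).prodMk
          (continuous_const.mul hcw)
      exact (hh.hfec (6*n+2)).comp_continuous hmap (fun z => ⟨hh.rmem z.2.1, trivial⟩)
    · have hmap : Continuous (fun z : ((U (6*n+2)) ×ˢ (univ : Set ℝ) : Set (X × ℝ)) =>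
          ((p, 2 - 2 * (z.1.2 * w n z.1.1)) : X × ℝ)) :=
        continuous_const.prodMk (continuous_const.sub (continuous_const.mul hcw))
      exact (hh.hfec (6*n+2)).comp_continuous hmap
        (fun z => ⟨hh.pmem (by omega), trivial⟩)
    · exact hcw
    · exact continuous_const
    · intro z hz
      rw [hz]
      norm_num
      exact hh.hfe1 _ _ _ (hh.rmem z.2.1) (hh.pmem (by omega))
  · have hq1 : q₀.1 ∉ closure (U (6*n+1)) := fun hc => hq (hh.Uclmono (by omega) hc)
    have hB : ((closure (U (6*n+1)))ᶜ ×ˢ (univ : Set ℝ)) ∈ 𝓝 q₀ :=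
      prod_mem_nhds (isClosed_closure.isOpen_compl.mem_nhds hq1) univ_mem
    have heq : ∀ q' ∈ (closure (U (6*n+1)))ᶜ ×ˢ (univ : Set ℝ),
        (if q'.2 * w n q'.1 ≤ 1/2 then
          fe (6*n+2) (r U fe w p n q'.1) (2 * (q'.2 * w n q'.1))
         else fe (6*n+2) p (2 - 2 * (q'.2 * w n q'.1))) = r U fe w p n q'.1 := by
      intro q' hq'
      have hw' : w n q'.1 = 0 := hh.hw0 n q'.1 (Or.inr (fun h => hq'.1 (subset_closure h)))
      simp only [hw', mul_zero]
      rw [if_pos (by norm_num), hh.hfe0 _ _ 0 le_rfl]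
    exact ((hr.comp continuous_fst).continuousAt).congr
      (eventuallyEq_of_mem hB fun q' hq' => (heq q' hq').symm)

/-- Boundary agreement on the frontier of the repair zone. -/
lemma bdry (n : ℕ) (h3 : 3 ≤ n) : ∀ x₁ ∈ frontier (EZ U n),
    w n x₁ = 0 ∧ r U fe w p n x₁ = p ∧ tri (w (n-1) x₁) = 0 := by
  obtain ⟨k, rfl⟩ : ∃ k, n = k + 1 := ⟨n-1, by omega⟩
  intro x₁ hx₁
  simp only [Nat.add_sub_cancel]
  have hEsub : EZ U (k+1) = closure (U (6*(k+1)-12)) ∩ (U (6*(k+1)-13))ᶜ := by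
    rw [EZ, if_pos h3, diff_eq]
  rw [hEsub] at hx₁
  have hcases := frontier_inter_subset (closure (U (6*(k+1)-12))) ((U (6*(k+1)-13))ᶜ) hx₁
  have e1 : 6*(k+1)-12 = 6*k-6 := by omega
  have e2 : 6*(k+1)-13 = 6*k-7 := by omega
  rcases hcases with ⟨hf, -⟩ | ⟨-, hf⟩
  · have hcl : x₁ ∈ closure (U (6*(k+1)-12)) := by simpa using hf.1
    have hnotU : x₁ ∉ U (6*(k+1)-12) := by
      intro hu
      exact hf.2 (interior_maximal subset_closure (hh.hUo _) hu)
    have hstep : closure (U (6*(k+1)-12)) ⊆ U (6*(k+1)-11) := hh.Uclmono (by omega)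
    have hmemk : x₁ ∈ closure (U (6*k)) := hh.Umono' (by omega) (hstep hcl)
    have hwk : w k x₁ = 1 :=
      hh.hw1 k x₁ hmemk (fun _ => by
        have e3 : 6*k-6 = 6*(k+1)-12 := by omega
        rw [e3]; exact hnotU)
    have hw0' : w (k+1) x₁ = 0 := by
      apply hh.hw0 (k+1) x₁
      exact Or.inl ⟨by omega, hh.Umono' (by omega) (hstep hcl)⟩
    refine ⟨hw0', ?_, by rw [hwk, tri_one]⟩
    rw [hh.rC k x₁ hmemk, hwk, tri_one, hh.hfe0 _ p 0 le_rfl]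
  · rw [frontier_compl] at hf
    have hcl : x₁ ∈ closure (U (6*(k+1)-13)) := frontier_subset_closure hf
    have hstep : closure (U (6*(k+1)-13)) ⊆ U (6*(k+1)-12) := hh.Uclmono (by omega)
    have hwk : w k x₁ = 0 := by
      apply hh.hw0 k x₁
      refine Or.inl ⟨by omega, ?_⟩
      have e3 : 6*k-7 = 6*(k+1)-13 := by omega
      rw [e3]; exact hcl
    have hmemk : x₁ ∈ closure (U (6*k)) := hh.Umono' (by omega) (hstep hcl)
    have hw0' : w (k+1) x₁ = 0 := by
      apply hh.hw0 (k+1) x₁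
      exact Or.inl ⟨by omega, hh.Umono' (by omega) (hstep hcl)⟩
    refine ⟨hw0', ?_, by rw [hwk, tri_zero]⟩
    rw [hh.rC k x₁ hmemk, hwk, tri_zero, hh.hfe0 _ p 0 le_rfl]

/-- Continuity of each slab homotopy. -/
lemma slab_cont (n : ℕ) (hr : Continuous (r U fe w p n)) :
    Continuous (fun q : X × ℝ => Phi U fe w p n q.1 q.2) := by
  have ΘC := hh.theta_cont n hr
  by_cases h3 : 3 ≤ n
  · have ΨC' : Continuous ((fun q : X × ℝ => fe (6*n-4) q.1 q.2) ∘
        (fun q : X × ℝ => (p, tri (w (n-1) q.1) * (1 - q.2)))) :=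
      (hh.hfec (6*n-4)).comp_continuous
        (continuous_const.prodMk
          ((tri_cont.comp ((hh.hwc (n-1)).comp continuous_fst)).mul
            (continuous_const.sub continuous_snd)))
        (fun q => ⟨hh.pmem (by omega), trivial⟩)
    have ΨC : Continuous (fun q : X × ℝ =>
        fe (6*n-4) p (tri (w (n-1) q.1) * (1 - q.2))) := ΨC'
    simp only [Phi, slab]
    classical
    apply Continuous.if _ ΨC ΘC
    intro a ha
    have haf : a.1 ∈ frontier (EZ U n) :=
      continuous_fst.frontier_preimage_subset (EZ U n) ha
    obtain ⟨hw', hr', htri⟩ := hh.bdry n h3 a.1 haf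
    rw [htri, zero_mul, hh.hfe0 _ _ 0 le_rfl, hw', mul_zero, if_pos (by norm_num),
      mul_zero, hh.hfe0 _ _ 0 le_rfl, hr']
  · apply ΘC.congr
    intro q
    have hE' : q.1 ∉ EZ U n := by simp [EZ, h3]
    rw [Phi, slab, if_neg hE']

lemma r_cont (n : ℕ) : Continuous (r U fe w p n) := by
  induction n with
  | zero => exact continuous_id
  | succ n ih =>
    exact (hh.slab_cont n ih).comp (continuous_id.prodMk continuous_const)

lemma Phi_cont (n : ℕ) : Continuous (fun q : X × ℝ => Phi U fe w p n q.1 q.2) :=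
  hh.slab_cont n (hh.r_cont n)

end Hyp


variable (U fe w p) in
/-- The global homotopy on time `[0,∞)` (constant for negative times). -/
def G (q : X × ℝ) : X := Phi U fe w p (⌊q.2⌋₊) q.1 (q.2 - ⌊q.2⌋₊)

variable (U fe w p) in
/-- The final homotopy, reparametrized to `I`. -/
def Fmap (q : I × X) : X :=
  if ((q.1 : ℝ)) < 1 then G U fe w p (q.2, (q.1:ℝ)/(1-(q.1:ℝ))) else p

namespace Hyp

variable (hh : Hyp U fe w p)
include hh

lemma G_stab (m : ℕ) (x : X) (hx : x ∈ U m) (t : ℝ) (ht : (m:ℝ) + 3 ≤ t) :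
    G U fe w p (x, t) = p := by
  have h : m + 3 ≤ ⌊t⌋₊ := Nat.le_floor (by push_cast; linarith)
  exact hh.Phi_stab m ⌊t⌋₊ x hx h _

lemma G_zero (x : X) : G U fe w p (x, 0) = x := by
  show Phi U fe w p (⌊(0:ℝ)⌋₊) x (0 - ⌊(0:ℝ)⌋₊) = x
  rw [Nat.floor_zero]
  have e : (0:ℝ) - ((0:ℕ):ℝ) = 0 := by norm_num
  rw [e, hh.Phi_zero]
  rfl

lemma G_cont : Continuous (G U fe w p) := by
  rw [continuous_iff_continuousAt]
  rintro ⟨x₀, t₀⟩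
  rcases lt_or_ge t₀ 1 with h1 | h1
  · have hmem : (univ ×ˢ Iio (1:ℝ)) ∈ 𝓝 (x₀, t₀) :=
      prod_mem_nhds univ_mem (Iio_mem_nhds h1)
    apply ContinuousAt.congr ((hh.Phi_cont 0).continuousAt)
    apply eventuallyEq_of_mem hmem
    rintro ⟨x, t⟩ ht
    have hfl : ⌊t⌋₊ = 0 := by
      rcases le_or_gt t 0 with h | h
      · exact Nat.floor_of_nonpos h
      · exact Nat.floor_eq_zero.mpr ht.2
    show Phi U fe w p 0 x t = Phi U fe w p (⌊t⌋₊) x (t - ⌊t⌋₊)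
    rw [hfl]
    norm_num
  · set m := ⌊t₀⌋₊ with hm
    have h0 : (0:ℝ) ≤ t₀ := by linarith
    have hm1 : 1 ≤ m := Nat.le_floor (by exact_mod_cast h1)
    have hlow : (m:ℝ) ≤ t₀ := Nat.floor_le h0
    have hup : t₀ < m + 1 := Nat.lt_floor_add_one t₀
    rcases eq_or_lt_of_le hlow with heq | hlt
    · obtain ⟨k, hk⟩ : ∃ k, m = k + 1 := ⟨m-1, by omega⟩
      have hglue : Continuous (fun q : X × ℝ =>
          if q.2 ≤ ((k+1:ℕ):ℝ) then Phi U fe w p k q.1 (q.2 - ((k:ℕ):ℝ))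
          else Phi U fe w p (k+1) q.1 (q.2 - ((k+1:ℕ):ℝ))) := by
        apply Continuous.if_le
        · exact (hh.Phi_cont k).comp
            (continuous_fst.prodMk (continuous_snd.sub continuous_const))
        · exact (hh.Phi_cont (k+1)).comp
            (continuous_fst.prodMk (continuous_snd.sub continuous_const))
        · exact continuous_snd
        · exact continuous_const
        · intro q hq
          rw [hq]
          have e1 : ((k+1:ℕ):ℝ) - ((k:ℕ):ℝ) = 1 := by push_cast; ring
          have e2 : ((k+1:ℕ):ℝ) - ((k+1:ℕ):ℝ) = 0 := by ring
          rw [e1, e2, Phi_one, hh.Phi_zero]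
      have hmm : (k:ℝ) < t₀ ∧ t₀ < (k:ℝ)+2 := by
        constructor
        · rw [← heq]; push_cast [hk]; linarith
        · push_cast [hk] at hup ⊢; linarith
      have hmem : (univ ×ˢ Ioo ((k:ℝ)) ((k:ℝ)+2)) ∈ 𝓝 (x₀, t₀) :=
        prod_mem_nhds univ_mem (Ioo_mem_nhds hmm.1 hmm.2)
      apply ContinuousAt.congr hglue.continuousAt
      apply eventuallyEq_of_mem hmem
      rintro ⟨x, t⟩ ht
      obtain ⟨htl, htu⟩ := ht.2
      show (if t ≤ ((k+1:ℕ):ℝ) then Phi U fe w p k x (t - ((k:ℕ):ℝ))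
          else Phi U fe w p (k+1) x (t - ((k+1:ℕ):ℝ)))
        = Phi U fe w p (⌊t⌋₊) x (t - ⌊t⌋₊)
      by_cases hb : t ≤ ((k+1:ℕ):ℝ)
      · rcases eq_or_lt_of_le hb with hbe | hbl
        · have hfl : ⌊t⌋₊ = k+1 := by rw [hbe, Nat.floor_natCast]
          rw [if_pos hb, hfl, hbe]
          have eL : ((k+1:ℕ):ℝ) - ((k:ℕ):ℝ) = 1 := by push_cast; ring
          have eR : ((k+1:ℕ):ℝ) - ((k+1:ℕ):ℝ) = 0 := by ring
          rw [eL, eR, Phi_one, hh.Phi_zero]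
        · have hfl : ⌊t⌋₊ = k := by
            rw [Nat.floor_eq_iff (le_of_lt (lt_of_le_of_lt (Nat.cast_nonneg k) htl))]
            refine ⟨le_of_lt htl, ?_⟩
            push_cast at hbl ⊢
            linarith
          rw [if_pos hb, hfl]
      · push_neg at hb
        have hfl : ⌊t⌋₊ = k+1 := by
          have hpos : (0:ℝ) ≤ t := le_of_lt (lt_of_le_of_lt (Nat.cast_nonneg (k+1)) hb)
          rw [Nat.floor_eq_iff hpos]
          constructor
          · exact le_of_lt hb
          · push_cast at htu ⊢
            linarith
        rw [if_neg (not_le.mpr hb), hfl]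
    · have hup2 : t₀ < (m:ℝ)+1 := by push_cast at hup ⊢; linarith
      have hmem : (univ ×ˢ Ioo ((m:ℝ)) ((m:ℝ)+1)) ∈ 𝓝 (x₀, t₀) :=
        prod_mem_nhds univ_mem (Ioo_mem_nhds hlt hup2)
      apply ContinuousAt.congr (((hh.Phi_cont m).comp
        (continuous_fst.prodMk (continuous_snd.sub continuous_const))).continuousAt)
      apply eventuallyEq_of_mem hmem
      rintro ⟨x, t⟩ ht
      have hfl : ⌊t⌋₊ = m := by
        rw [Nat.floor_eq_iff (le_of_lt (lt_of_le_of_lt (Nat.cast_nonneg m) ht.2.1))]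
        exact ⟨le_of_lt ht.2.1, by push_cast at ht ⊢; linarith [ht.2.2]⟩
      show Phi U fe w p m x (t - ((m:ℕ):ℝ)) = Phi U fe w p (⌊t⌋₊) x (t - ⌊t⌋₊)
      rw [hfl]

lemma Fmap_cont (hcov : ∀ x : X, ∃ m, x ∈ U m) : Continuous (Fmap U fe w p) := by
  rw [continuous_iff_continuousAt]
  rintro ⟨τ₀, x₀⟩
  by_cases hτ : (τ₀ : ℝ) < 1
  · have hopen : IsOpen {q : I × X | (q.1:ℝ) < 1} :=
      isOpen_lt (continuous_subtype_val.comp continuous_fst) continuous_const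
    have hmem : {q : I × X | (q.1:ℝ) < 1} ∈ 𝓝 (τ₀, x₀) := hopen.mem_nhds hτ
    have hca : ContinuousAt (fun q : I × X =>
        G U fe w p (q.2, (q.1:ℝ)/(1-(q.1:ℝ)))) (τ₀, x₀) := by
      apply ContinuousAt.comp hh.G_cont.continuousAt
      apply ContinuousAt.prodMk continuous_snd.continuousAt
      apply ContinuousAt.div
        ((continuous_subtype_val.comp continuous_fst).continuousAt)
        (ContinuousAt.sub continuousAt_const
          ((continuous_subtype_val.comp continuous_fst).continuousAt))
      exact ne_of_gt (sub_pos.mpr hτ)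
    apply hca.congr
    apply eventuallyEq_of_mem hmem
    intro q hq
    exact (if_pos hq).symm
  · have hτ1 : (τ₀:ℝ) = 1 := le_antisymm τ₀.2.2 (not_lt.mp hτ)
    obtain ⟨m, hm⟩ := hcov x₀
    set c : ℝ := ((m:ℝ)+3)/((m:ℝ)+4) with hc
    have hc1 : c < 1 := (div_lt_one (by positivity)).mpr (by linarith)
    have hNo : IsOpen {q : I × X | c < (q.1:ℝ) ∧ q.2 ∈ U m} :=
      (isOpen_lt continuous_const (continuous_subtype_val.comp continuous_fst)).inter
        ((hh.hUo m).preimage continuous_snd)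
    have hNmem : {q : I × X | c < (q.1:ℝ) ∧ q.2 ∈ U m} ∈ 𝓝 (τ₀, x₀) :=
      hNo.mem_nhds ⟨by rw [hτ1]; exact hc1, hm⟩
    have hval : Fmap U fe w p (τ₀, x₀) = p := if_neg (by rw [hτ1]; norm_num)
    rw [ContinuousAt, hval]
    apply Filter.Tendsto.congr' ?_ tendsto_const_nhds
    apply eventuallyEq_of_mem hNmem
    rintro ⟨τ, x⟩ ⟨hcτ, hxm⟩
    show p = Fmap U fe w p (τ, x)
    by_cases hq : (τ:ℝ) < 1
    · rw [Fmap, if_pos hq]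
      have h1τ : (0:ℝ) < 1 - τ := by linarith
      have hge : ((m:ℝ)+3) ≤ (τ:ℝ)/(1-(τ:ℝ)) := by
        rw [le_div_iff₀ h1τ]
        have hmul : c * ((m:ℝ)+4) = (m:ℝ)+3 := by
          rw [hc]; field_simp
        nlinarith [mul_lt_mul_of_pos_right hcτ (show (0:ℝ) < (m:ℝ)+4 by positivity), hmul]
      exact (hh.G_stab m x hxm _ hge).symm
    · rw [Fmap, if_neg hq]

lemma master (hcov : ∀ x : X, ∃ m, x ∈ U m) : ContractibleSpace X := by
  rw [contractible_iff_id_nullhomotopic]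
  refine ⟨p, ⟨⟨⟨Fmap U fe w p, hh.Fmap_cont hcov⟩, ?_, ?_⟩⟩⟩
  · intro x
    show Fmap U fe w p (0, x) = x
    rw [Fmap, if_pos (by norm_num)]
    have e : ((0:I):ℝ)/(1-((0:I):ℝ)) = 0 := by norm_num
    rw [e, hh.G_zero]
  · intro x
    show Fmap U fe w p (1, x) = p
    rw [Fmap, if_neg (by norm_num)]

end Hyp

end MonotoneUnionProof

/-- **Theorem 1.** If a normal space `X` is the union of a sequence of open subsets `{Uₙ}`
such that `cl(Uₙ) ⊆ Uₙ₊₁` and `Uₙ` contracts to a point in `Uₙ₊₁` for each `n`, then `X`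
is contractible. -/
theorem monotone_union_contractible
    {X : Type*} [TopologicalSpace X] [NormalSpace X]
    (U : ℕ → Set X) (hopen : ∀ n, IsOpen (U n))
    (hcl : ∀ n, closure (U n) ⊆ U (n + 1))
    (hunion : (⋃ n, U n) = Set.univ)
    (hcontr : ∀ n, ∃ f : (U n) × I → X, Continuous f ∧
      (∀ x : U n, f (x, 0) = (x : X)) ∧
      (∃ p ∈ U (n + 1), ∀ x : U n, f (x, 1) = p) ∧
      (∀ z, f z ∈ U (n + 1))) :
    ContractibleSpace X := by
  classical
  obtain ⟨f, hfc, hf0, hfp, hfm⟩ :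
      ∃ f : ∀ n, (U n) × I → X, (∀ n, Continuous (f n)) ∧
        (∀ n (x : U n), f n (x, 0) = (x : X)) ∧
        (∀ n, ∃ p ∈ U (n + 1), ∀ x : U n, f n (x, 1) = p) ∧
        (∀ n z, f n z ∈ U (n + 1)) := by
    choose f h1 h2 h3 h4 using hcontr
    exact ⟨f, h1, h2, h3, h4⟩
  choose pt hptm hpt using hfp
  set p : X := pt 0 with hpdef
  set fe : ℕ → X → ℝ → X := fun k x t =>
    if h : x ∈ U k then f k (⟨x, h⟩, Set.projIcc 0 1 zero_le_one t) else x with hfedef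
  have hwex : ∀ n : ℕ, ∃ wn : C(X, ℝ),
      Set.EqOn wn 0 ((if 2 ≤ n then closure (U (6*n-7)) else ∅) ∪ (U (6*n+1))ᶜ) ∧
      Set.EqOn wn 1 (closure (U (6*n)) \ (if 2 ≤ n then U (6*n-6) else ∅)) ∧
      ∀ x, wn x ∈ Set.Icc (0:ℝ) 1 := by
    intro n
    apply exists_continuous_zero_one_of_isClosed
    · apply IsClosed.union
      · split_ifs
        · exact isClosed_closure
        · exact isClosed_empty
      · exact (hopen _).isClosed_compl
    · apply IsClosed.sdiff isClosed_closure
      split_ifs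
      · exact hopen _
      · exact isOpen_empty
    · rw [Set.disjoint_left]
      rintro x (hx | hx) ⟨hx2, hx3⟩
      · split_ifs at hx with h2
        · rw [if_pos h2] at hx3
          have e : 6*n-7+1 = 6*n-6 := by omega
          exact hx3 (by rw [← e]; exact hcl (6*n-7) hx)
        · exact absurd hx (Set.notMem_empty x)
      · exact hx (hcl (6*n) hx2)
  choose wfun hwA hwB hwC using hwex
  have hh : MonotoneUnionProof.Hyp U fe (fun n => (wfun n : X → ℝ)) p := by
    refine ⟨hopen, hcl, hptm 0, ?_, ?_, ?_, ?_, ?_,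
      fun n => (wfun n).continuous, fun n x => hwC n x, ?_, ?_⟩
    · -- hfe0
      intro k x t ht
      simp only [hfedef]
      by_cases h : x ∈ U k
      · rw [dif_pos h, Set.projIcc_of_le_left _ ht]
        exact hf0 k ⟨x, h⟩
      · rw [dif_neg h]
    · -- hfem
      intro k x t h
      simp only [hfedef]
      rw [dif_pos h]
      exact hfm k _
    · -- hfe1
      intro k x y hx hy
      simp only [hfedef]
      rw [dif_pos hx, dif_pos hy, Set.projIcc_of_right_le _ le_rfl]
      rw [show ((⟨1, Set.right_mem_Icc.2 zero_le_one⟩ : I)) = (1 : I) from rfl]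
      rw [hpt k ⟨x, hx⟩, hpt k ⟨y, hy⟩]
    · -- hfen
      intro k x t h
      simp only [hfedef]
      rw [dif_neg h]
    · -- hfec
      intro k
      rw [continuousOn_iff_continuous_restrict]
      have heq : ∀ z : ((U k) ×ˢ (Set.univ : Set ℝ) : Set (X × ℝ)),
          (fun z : ((U k) ×ˢ (Set.univ : Set ℝ) : Set (X × ℝ)) =>
            f k (⟨z.1.1, z.2.1⟩, Set.projIcc 0 1 zero_le_one z.1.2)) z
          = Set.restrict _ (fun q : X × ℝ => fe k q.1 q.2) z := by
        intro z
        simp only [Set.restrict_apply, hfedef]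
        change _ = dite ((z : X × ℝ).1 ∈ U k) _ _
        rw [dif_pos (Set.mem_prod.mp z.2).1]
      apply Continuous.congr _ heq
      apply (hfc k).comp
      apply Continuous.prodMk
      · exact Continuous.subtype_mk (continuous_fst.comp continuous_subtype_val) _
      · exact continuous_projIcc.comp (continuous_snd.comp continuous_subtype_val)
    · -- hw1
      intro n x hx hcon
      have hmem : x ∈ closure (U (6*n)) \ (if 2 ≤ n then U (6*n-6) else ∅) := by
        refine ⟨hx, ?_⟩
        split_ifs with h2
        · exact hcon h2
        · exact Set.notMem_empty x
      simpa using hwB n hmem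
    · -- hw0
      intro n x hx
      have hmem : x ∈ (if 2 ≤ n then closure (U (6*n-7)) else ∅) ∪ (U (6*n+1))ᶜ := by
        rcases hx with ⟨h2, hmem7⟩ | hnot
        · left
          rw [if_pos h2]
          exact hmem7
        · right
          exact hnot
      simpa using hwA n hmem
  apply hh.master
  intro x
  have : x ∈ ⋃ n, U n := by rw [hunion]; exact Set.mem_univ x
  exact Set.mem_iUnion.mp this
end MonotoneUnionProof
end

section
/- If a normal space X is the union of a sequence of open subsets U_1, U_2, ... and there is a point p_0 ∈ U_1 such that for each n ≥ 1, cl(U_n) ⊆ U_{n+1} and U_n contracts to p_0 in U_{n+1} fixing p_0, then X is contractible. -/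
open unitInterval

/-- The projection `ℝ → I`. -/
noncomputable def projI : ℝ → I := Set.projIcc 0 1 zero_le_one

lemma projI_continuous : Continuous projI := continuous_projIcc

lemma projI_of_nonpos {u : ℝ} (h : u ≤ 0) : projI u = 0 := by
  rw [projI, Set.projIcc_of_le_left _ h]; rfl

lemma projI_of_one_le {u : ℝ} (h : 1 ≤ u) : projI u = 1 := by
  rw [projI, Set.projIcc_of_right_le _ h]; rfl

/-- Iterated partial contractions. -/
noncomputable def auxK {X : Type*} (H : ℕ → X × I → X) : ℕ → X → X
  | 0, x => H 0 (x, 1)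
  | (n+1), x => H (2*(n+1)) (auxK H n x, 1)

/-- The map before stage `n`. -/
noncomputable def auxKprev {X : Type*} (H : ℕ → X × I → X) : ℕ → X → X
  | 0, x => x
  | (n+1), x => auxK H n x

/-- Stage `n` of the infinite homotopy, with time clamped to `[0,1]`. -/
noncomputable def auxStep {X : Type*} (H : ℕ → X × I → X) (n : ℕ) (x : X) (u : ℝ) : X :=
  H (2*n) (auxKprev H n x, projI u)

/-- The infinite concatenation, on time scale `[0,∞)`. -/
noncomputable def auxF {X : Type*} (H : ℕ → X × I → X) (z : X × ℝ) : X :=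
  auxStep H ⌊z.2⌋₊ z.1 (z.2 - ⌊z.2⌋₊)

/-- **Theorem 3.** If a normal space `X` is the union of a sequence of open subsets `{Uₙ}`
and there is a point `p₀ ∈ U₀` such that for each `n`, `cl(Uₙ) ⊆ Uₙ₊₁` and `Uₙ` contracts
to `p₀` in `Uₙ₊₁` fixing `p₀`, then `X` is contractible. -/
theorem monotone_union_contractible_fixed_point
    {X : Type*} [TopologicalSpace X] [NormalSpace X]
    (U : ℕ → Set X) (hopen : ∀ n, IsOpen (U n))
    (hunion : (⋃ n, U n) = Set.univ)
    (p₀ : X) (hp₀ : p₀ ∈ U 0)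
    (hcl : ∀ n, closure (U n) ⊆ U (n + 1))
    (hcontr : ∀ n, ∃ f : (U n) × I → X, Continuous f ∧
      (∀ x : U n, f (x, 0) = (x : X)) ∧
      (∀ x : U n, f (x, 1) = p₀) ∧
      (∀ (hp : p₀ ∈ U n) (t : I), f (⟨p₀, hp⟩, t) = p₀) ∧
      (∀ z, f z ∈ U (n + 1))) :
    ContractibleSpace X := by
  classical
  -- monotonicity
  have hmono : ∀ {m n : ℕ}, m ≤ n → U m ⊆ U n := by
    intro m n h
    induction h with
    | refl => exact subset_rfl
    | step h ih => exact ih.trans (subset_closure.trans (hcl _))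
  have hp : ∀ n, p₀ ∈ U n := fun n => hmono (Nat.zero_le n) hp₀
  -- the basic partial contractions, globally defined
  have hH : ∀ n, ∃ H : X × I → X, Continuous H ∧ (∀ x, H (x, 0) = x) ∧
      (∀ x ∈ closure (U n), H (x, 1) = p₀) ∧ (∀ t, H (p₀, t) = p₀) ∧
      (∀ z : X × I, ∀ m, n + 2 ≤ m → z.1 ∈ U m → H z ∈ U m) := by
    intro n
    obtain ⟨f, hfc, hf0, hf1, hfp, hfU⟩ := hcontr (n+1)
    obtain ⟨V, hVo, hV1, hV2⟩ :=
      normal_exists_closure_subset isClosed_closure (hopen (n+1)) (hcl n)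
    obtain ⟨φ, hφ0, hφ1, hφ01⟩ := exists_continuous_zero_one_of_isClosed
      (isClosed_compl_iff.2 hVo) isClosed_closure
      (Set.disjoint_of_subset_right hV1 disjoint_compl_left)
    set τ : X × I → I := fun z =>
      ⟨(z.2:ℝ) * φ z.1, unitInterval.mul_mem z.2.2 (hφ01 z.1)⟩ with hτdef
    set g : X × I → X := fun z =>
      if h : z.1 ∈ U (n+1) then f (⟨z.1, h⟩, τ z) else z.1 with hgdef
    have hgin : ∀ (z : X × I) (h : z.1 ∈ U (n+1)), g z = f (⟨z.1, h⟩, τ z) :=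
      fun z h => dif_pos h
    have hτz : ∀ z : X × I, φ z.1 = 0 → τ z = 0 := by
      intro z h0
      rw [hτdef]
      exact Subtype.ext (by simp [h0])
    have hτ0 : ∀ x : X, τ (x, 0) = 0 := by
      intro x
      rw [hτdef]
      exact Subtype.ext (by simp)
    have hτ1 : ∀ x ∈ closure (U n), τ (x, 1) = 1 := by
      intro x hx
      rw [hτdef]
      exact Subtype.ext (by simpa using hφ1 hx)
    have hgout : ∀ z : X × I, φ z.1 = 0 → g z = z.1 := by
      intro z h0
      by_cases h : z.1 ∈ U (n+1)
      · rw [hgin z h, hτz z h0]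
        exact hf0 ⟨z.1, h⟩
      · exact dif_neg h
    have hzero : ∀ x : X, g (x, 0) = x := by
      intro x
      by_cases h : x ∈ U (n+1)
      · rw [hgin (x, 0) h, hτ0 x]
        exact hf0 ⟨x, h⟩
      · exact dif_neg h
    have hone : ∀ x ∈ closure (U n), g (x, 1) = p₀ := by
      intro x hx
      rw [hgin (x, 1) (hcl n hx), hτ1 x hx]
      exact hf1 ⟨x, hcl n hx⟩
    have hpfix : ∀ t : I, g (p₀, t) = p₀ := by
      intro t
      rw [hgin (p₀, t) (hp (n+1))]
      exact hfp (hp (n+1)) _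
    have hin : ∀ z : X × I, ∀ m, n + 2 ≤ m → z.1 ∈ U m → g z ∈ U m := by
      intro z m hm hz
      by_cases h : z.1 ∈ U (n+1)
      · rw [hgin z h]
        exact hmono hm (hfU _)
      · have : g z = z.1 := dif_neg h
        rw [this]; exact hz
    have hc1 : ContinuousOn g (U (n+1) ×ˢ (Set.univ : Set I)) := by
      rw [continuousOn_iff_continuous_restrict]
      have heq : ((U (n+1) ×ˢ (Set.univ : Set I)).restrict g) = fun z =>
          f (⟨z.1.1, z.2.1⟩, τ z.1) := by
        funext z
        exact hgin z.1 z.2.1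
      show Continuous ((U (n+1) ×ˢ (Set.univ : Set I)).restrict g); rw [heq]
      apply hfc.comp
      have hτc : Continuous τ := by
        rw [hτdef]
        exact ((continuous_subtype_val.comp continuous_snd).mul
          (φ.continuous.comp continuous_fst)).subtype_mk _
      refine Continuous.prodMk ?_ ?_
      · exact (continuous_fst.comp continuous_subtype_val).subtype_mk _
      · exact hτc.comp continuous_subtype_val
    have hc2 : ContinuousOn g ((closure V)ᶜ ×ˢ (Set.univ : Set I)) := by
      refine ContinuousOn.congr continuous_fst.continuousOn ?_
      intro z hz
      exact hgout z (by simpa using hφ0 (fun hV => hz.1 (subset_closure hV)))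
    refine ⟨g, ?_, hzero, hone, hpfix, hin⟩
    rw [continuous_iff_continuousAt]
    intro z
    by_cases h : z.1 ∈ U (n+1)
    · exact hc1.continuousAt (((hopen (n+1)).prod isOpen_univ).mem_nhds ⟨h, trivial⟩)
    · exact hc2.continuousAt ((isClosed_closure.isOpen_compl.prod isOpen_univ).mem_nhds
        ⟨fun hc => h (hV2 hc), trivial⟩)
  choose H Hcont H0 H1 Hp HU using hH
  -- properties of K
  have Kcont : ∀ n, Continuous (auxK H n) := by
    intro n
    induction n with
    | zero =>
      have : auxK H 0 = fun x => H 0 (x, 1) := funext fun x => rfl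
      rw [this]
      exact (Hcont 0).comp (continuous_id.prodMk continuous_const)
    | succ m ih =>
      have : auxK H (m+1) = fun x => H (2*(m+1)) (auxK H m x, 1) := funext fun x => rfl
      rw [this]
      exact (Hcont (2*(m+1))).comp (ih.prodMk continuous_const)
  have KU : ∀ n m, 2*n + 2 ≤ m → ∀ x ∈ U m, auxK H n x ∈ U m := by
    intro n
    induction n with
    | zero =>
      intro m hm x hx
      exact HU 0 (x, 1) m (by omega) hx
    | succ k ih =>
      intro m hm x hx
      exact HU (2*(k+1)) (auxK H k x, 1) m (by omega) (ih m (by omega) x hx)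
  have K1 : ∀ n, ∀ x ∈ closure (U n), auxK H n x = p₀ := by
    intro n
    induction n with
    | zero =>
      intro x hx
      exact H1 0 x hx
    | succ k ih =>
      intro x hx
      have h1 : x ∈ U (2*k+2) := hmono (by omega) (hcl (k+1) hx)
      have h2 : auxK H k x ∈ U (2*(k+1)) := by
        have : 2*(k+1) = 2*k+2 := by ring
        rw [this]
        exact KU k (2*k+2) le_rfl x h1
      exact H1 (2*(k+1)) (auxK H k x) (subset_closure h2)
  have Kprevcont : ∀ n, Continuous (auxKprev H n) := by
    intro n
    cases n with
    | zero => exact continuous_id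
    | succ m => exact Kcont m
  -- properties of the steps
  have Scont : ∀ n, Continuous (fun z : X × ℝ => auxStep H n z.1 z.2) := by
    intro n
    exact (Hcont (2*n)).comp (((Kprevcont n).comp continuous_fst).prodMk
      (projI_continuous.comp continuous_snd))
  have S0 : ∀ n x u, u ≤ 0 → auxStep H n x u = auxKprev H n x := by
    intro n x u hu
    rw [auxStep, projI_of_nonpos hu]
    exact H0 (2*n) _
  have S1 : ∀ n x u, (1:ℝ) ≤ u → auxStep H n x u = auxK H n x := by
    intro n x u hu
    rw [auxStep, projI_of_one_le hu]
    cases n with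
    | zero => rfl
    | succ m => rfl
  have Skill : ∀ N n (x : X), x ∈ U N → N + 1 ≤ n → ∀ u, auxStep H n x u = p₀ := by
    intro N n x hx hn u
    obtain ⟨m, rfl⟩ : ∃ m, n = m + 1 := ⟨n - 1, by omega⟩
    rw [auxStep]
    have : auxKprev H (m+1) x = p₀ := K1 m x (subset_closure (hmono (by omega) hx))
    rw [this]
    exact Hp (2*(m+1)) _
  -- properties of F
  have bdry : ∀ (k : ℕ) (y : X), auxStep H (k+1) y 0 = auxStep H k y 1 := by
    intro k y
    rw [S0 _ _ _ le_rfl, S1 _ _ _ le_rfl]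
    rfl
  have floor_eq : ∀ (k : ℕ) (r : ℝ), ((k:ℕ):ℝ) ≤ r → r < ((k:ℕ):ℝ) + 1 → ⌊r⌋₊ = k :=
    fun k r h1 h2 => (Nat.floor_eq_iff (le_trans (Nat.cast_nonneg k) h1)).2 ⟨h1, h2⟩
  have Fcont : Continuous (auxF H) := by
    rw [continuous_iff_continuousAt]
    rintro ⟨x, s⟩
    rcases lt_or_ge s 1 with hs | hs
    · -- below time 1 : stage 0 everywhere
      have hmem : (Set.univ ×ˢ Set.Iio (1:ℝ)) ∈ nhds ((x, s) : X × ℝ) :=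
        (isOpen_univ.prod isOpen_Iio).mem_nhds ⟨trivial, hs⟩
      refine ((Scont 0).continuousAt).congr (Filter.eventuallyEq_of_mem hmem ?_)
      intro z hz
      have hfz : ⌊z.2⌋₊ = 0 := Nat.floor_eq_zero.2 hz.2
      show auxStep H 0 z.1 z.2 = auxF H z
      rw [auxF, hfz]
      norm_num
    · have hn1 : 1 ≤ ⌊s⌋₊ := Nat.le_floor (by exact_mod_cast hs)
      obtain ⟨m, hm⟩ : ∃ m, ⌊s⌋₊ = m + 1 := ⟨⌊s⌋₊ - 1, by omega⟩
      have h0s : (0:ℝ) ≤ s := zero_le_one.trans hs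
      have hfl : (((m+1:ℕ)):ℝ) ≤ s := by rw [← hm]; exact Nat.floor_le h0s
      have hfu : s < (((m+1:ℕ)):ℝ) + 1 := by rw [← hm]; exact Nat.lt_floor_add_one s
      rcases eq_or_lt_of_le hfl with heq | hlt
      · -- exactly at an integer time
        have cw1 : ContinuousWithinAt (auxF H)
            (Set.univ ×ˢ Set.Ioc ((m:ℕ):ℝ) (((m:ℕ):ℝ) + 1)) (x, s) := by
          have hc : Continuous (fun z : X × ℝ => auxStep H m z.1 (z.2 - ((m:ℕ):ℝ))) :=
            (Scont m).comp (continuous_fst.prodMk (continuous_snd.sub continuous_const))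
          have heqon : Set.EqOn (auxF H) (fun z : X × ℝ => auxStep H m z.1 (z.2 - ((m:ℕ):ℝ)))
              (Set.univ ×ˢ Set.Ioc ((m:ℕ):ℝ) (((m:ℕ):ℝ) + 1)) := by
            rintro ⟨y, r⟩ hyr
            rcases eq_or_lt_of_le hyr.2.2 with h1 | h1
            · have e1 : r - (((m+1:ℕ)):ℝ) = 0 := by push_cast; linarith
              have e2 : r - ((m:ℕ):ℝ) = 1 := by push_cast; linarith
              have hfr : ⌊r⌋₊ = m + 1 := floor_eq (m+1) r (by push_cast; linarith)
                (by push_cast; linarith)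
              show auxF H (y, r) = _
              rw [auxF, hfr]
              show auxStep H (m+1) y (r - (((m+1:ℕ)):ℝ)) = auxStep H m y (r - ((m:ℕ):ℝ))
              rw [e1, e2]
              exact bdry m y
            · have hfr : ⌊r⌋₊ = m := floor_eq m r (le_of_lt hyr.2.1) h1
              show auxF H (y, r) = _
              rw [auxF, hfr]
          refine (hc.continuousWithinAt).congr heqon ?_
          refine heqon ⟨trivial, ?_⟩
          show s ∈ Set.Ioc ((m:ℕ):ℝ) (((m:ℕ):ℝ) + 1)
          push_cast at heq ⊢
          refine Set.mem_Ioc.2 ⟨?_, ?_⟩ <;> linarith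
        have cw2 : ContinuousWithinAt (auxF H)
            (Set.univ ×ˢ Set.Ico (((m+1:ℕ)):ℝ) ((((m+1:ℕ)):ℝ) + 1)) (x, s) := by
          have hc : Continuous (fun z : X × ℝ => auxStep H (m+1) z.1 (z.2 - (((m+1:ℕ)):ℝ))) :=
            (Scont (m+1)).comp (continuous_fst.prodMk (continuous_snd.sub continuous_const))
          have heqon : Set.EqOn (auxF H)
              (fun z : X × ℝ => auxStep H (m+1) z.1 (z.2 - (((m+1:ℕ)):ℝ)))
              (Set.univ ×ˢ Set.Ico (((m+1:ℕ)):ℝ) ((((m+1:ℕ)):ℝ) + 1)) := by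
            rintro ⟨y, r⟩ hyr
            have hfr : ⌊r⌋₊ = m + 1 := floor_eq (m+1) r hyr.2.1 hyr.2.2
            show auxF H (y, r) = _
            rw [auxF, hfr]
          refine (hc.continuousWithinAt).congr heqon ?_
          refine heqon ⟨trivial, ?_⟩
          show s ∈ Set.Ico (((m+1:ℕ)):ℝ) ((((m+1:ℕ)):ℝ) + 1)
          refine Set.mem_Ico.2 ⟨?_, ?_⟩ <;> linarith
        have hun : ((Set.univ : Set X) ×ˢ Set.Ioc ((m:ℕ):ℝ) (((m:ℕ):ℝ) + 1)) ∪
            ((Set.univ : Set X) ×ˢ Set.Ico (((m+1:ℕ)):ℝ) ((((m+1:ℕ)):ℝ) + 1)) =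
            (Set.univ : Set X) ×ˢ Set.Ioo ((m:ℕ):ℝ) ((((m+1:ℕ)):ℝ) + 1) := by
          rw [← Set.prod_union]
          congr 1
          have e : (((m+1:ℕ)):ℝ) = ((m:ℕ):ℝ) + 1 := by push_cast; ring
          rw [e]
          exact Set.Ioc_union_Ico_eq_Ioo (by linarith) (by linarith)
        refine (cw1.union cw2).continuousAt ?_
        rw [hun]
        refine (isOpen_univ.prod isOpen_Ioo).mem_nhds ⟨trivial, ?_⟩
        show s ∈ Set.Ioo ((m:ℕ):ℝ) ((((m+1:ℕ)):ℝ) + 1)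
        push_cast at heq ⊢
        refine Set.mem_Ioo.2 ⟨?_, ?_⟩ <;> linarith
      · -- strictly between integers
        have hmem : (Set.univ ×ˢ Set.Ioo (((m+1:ℕ)):ℝ) ((((m+1:ℕ)):ℝ) + 1)) ∈
            nhds ((x, s) : X × ℝ) :=
          (isOpen_univ.prod isOpen_Ioo).mem_nhds ⟨trivial, hlt, hfu⟩
        have hc : Continuous (fun z : X × ℝ => auxStep H (m+1) z.1 (z.2 - (((m+1:ℕ)):ℝ))) :=
          (Scont (m+1)).comp (continuous_fst.prodMk (continuous_snd.sub continuous_const))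
        refine (hc.continuousAt).congr (Filter.eventuallyEq_of_mem hmem ?_)
        rintro ⟨y, r⟩ hyr
        have hfr : ⌊r⌋₊ = m + 1 := floor_eq (m+1) r (le_of_lt hyr.2.1) hyr.2.2
        show _ = auxF H (y, r)
        rw [auxF, hfr]
  have F0 : ∀ x : X, auxF H (x, 0) = x := by
    intro x
    rw [auxF]
    rw [S0 _ _ _ (by simp)]
    simp [auxKprev, Nat.floor_zero]
  have Fkill : ∀ N (x : X) (s : ℝ), x ∈ U N → ((N:ℝ) + 1) ≤ s → auxF H (x, s) = p₀ := by
    intro N x s hx hs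
    rw [auxF]
    exact Skill N _ x hx (Nat.le_floor (by push_cast; exact hs)) _
  -- the full homotopy
  set Φ : X × I → X := fun z =>
    if ((z.2 : ℝ) = 1) then p₀ else auxF H (z.1, (z.2 : ℝ) / (1 - (z.2 : ℝ))) with hΦ
  have Φcont : Continuous Φ := by
    rw [continuous_iff_continuousAt]
    rintro ⟨x, t⟩
    by_cases ht : (t : ℝ) = 1
    · obtain ⟨N, hN⟩ : ∃ N, x ∈ U N :=
        Set.mem_iUnion.1 (hunion ▸ Set.mem_univ x)
      have hWopen : IsOpen (U N ×ˢ {u : I | ((N:ℝ)+1)/((N:ℝ)+2) < (u:ℝ)}) :=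
        (hopen N).prod (isOpen_Ioi.preimage continuous_subtype_val)
      have hWmem : ((x, t) : X × I) ∈ U N ×ˢ {u : I | ((N:ℝ)+1)/((N:ℝ)+2) < (u:ℝ)} := by
        refine ⟨hN, ?_⟩
        show ((N:ℝ)+1)/((N:ℝ)+2) < (t:ℝ)
        rw [ht, div_lt_one (by positivity)]
        linarith
      refine (continuousAt_const : ContinuousAt (fun _ : X × I => p₀) (x, t)).congr
        (Filter.eventuallyEq_of_mem (hWopen.mem_nhds hWmem) ?_)
      rintro ⟨y, u⟩ hyu
      show p₀ = Φ (y, u)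
      by_cases hu : (u : ℝ) = 1
      · rw [hΦ]
        show p₀ = if ((u:ℝ) = 1) then p₀ else _
        rw [if_pos hu]
      · have hu1 : (u:ℝ) < 1 := lt_of_le_of_ne u.2.2 hu
        have hNu : ((N:ℝ)+1)/((N:ℝ)+2) < (u:ℝ) := hyu.2
        have harg : ((N:ℝ) + 1) ≤ (u:ℝ)/(1-(u:ℝ)) := by
          rw [le_div_iff₀ (by linarith)]
          rw [div_lt_iff₀ (by positivity)] at hNu
          nlinarith
        rw [hΦ]
        show p₀ = if ((u:ℝ) = 1) then p₀ else auxF H (y, (u:ℝ)/(1-(u:ℝ)))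
        rw [if_neg hu]
        exact (Fkill N y _ hyu.1 harg).symm
    · have ht1 : (t:ℝ) < 1 := lt_of_le_of_ne t.2.2 ht
      have hS : (Set.univ ×ˢ {u : I | (u:ℝ) < 1}) ∈ nhds ((x, t) : X × I) :=
        (isOpen_univ.prod (isOpen_Iio.preimage continuous_subtype_val)).mem_nhds
          ⟨trivial, ht1⟩
      have hg : ContinuousAt (fun z : X × I => auxF H (z.1, (z.2:ℝ)/(1-(z.2:ℝ)))) (x, t) := by
        refine Fcont.continuousAt.comp ?_
        refine ContinuousAt.prodMk continuousAt_fst ?_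
        refine ContinuousAt.div
          (continuous_subtype_val.comp continuous_snd).continuousAt
          (continuous_const.sub (continuous_subtype_val.comp continuous_snd)).continuousAt ?_
        show (1:ℝ) - (t:ℝ) ≠ 0
        intro h
        exact ht (by linarith)
      refine hg.congr (Filter.eventuallyEq_of_mem hS ?_)
      rintro ⟨y, u⟩ hyu
      show auxF H (y, (u:ℝ)/(1-(u:ℝ))) = Φ (y, u)
      rw [hΦ]
      show _ = if ((u:ℝ) = 1) then p₀ else auxF H (y, (u:ℝ)/(1-(u:ℝ)))
      rw [if_neg (ne_of_lt hyu.2)]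
  have Φ0 : ∀ x : X, Φ (x, 0) = x := by
    intro x
    rw [hΦ]
    show (if (((0:I):ℝ) = 1) then p₀ else auxF H (x, ((0:I):ℝ)/(1-((0:I):ℝ)))) = x
    rw [if_neg (by norm_num)]
    norm_num
    exact F0 x
  have Φ1 : ∀ x : X, Φ (x, 1) = p₀ := by
    intro x
    rw [hΦ]
    show (if (((1:I):ℝ) = 1) then p₀ else _) = p₀
    rw [if_pos (by norm_num)]
  rw [contractible_iff_id_nullhomotopic]
  exact ⟨p₀, ⟨{ toFun := fun p => Φ (p.2, p.1),
                continuous_toFun := Φcont.comp (continuous_snd.prodMk continuous_fst),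
                map_zero_left := Φ0, map_one_left := Φ1 }⟩⟩
end

section
/- Let X be a completely regular topological space and let W ⊆ U_1 ⊆ U_2 be open subsets of X. If W contracts to a point p_0 ∈ W within U_1 fixing p_0, and U_1 contracts to some point within U_2, then U_1 contracts to p_0 within U_2 fixing p_0. -/
open unitInterval

/-- Glue a function from continuous descriptions on two open sets covering the space. -/
private lemma glue_open₂ {α β : Type*} [TopologicalSpace α] [TopologicalSpace β]
    {s t : Set α} (hs : IsOpen s) (ht : IsOpen t)
    {F b1 b2 : α → β} (h1 : ContinuousOn b1 s) (h2 : ContinuousOn b2 t)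
    (hF1 : Set.EqOn F b1 s) (hF2 : Set.EqOn F b2 t)
    (hcov : ∀ x, x ∈ s ∨ x ∈ t) : Continuous F := by
  rw [continuous_iff_continuousAt]
  intro z
  rcases hcov z with hz | hz
  · exact (h1.continuousAt (hs.mem_nhds hz)).congr
      (Filter.eventuallyEq_of_mem (hs.mem_nhds hz) hF1).symm
  · exact (h2.continuousAt (ht.mem_nhds hz)).congr
      (Filter.eventuallyEq_of_mem (ht.mem_nhds hz) hF2).symm

private noncomputable def π : ℝ → I := Set.projIcc 0 1 zero_le_one

private lemma π_cont : Continuous π := continuous_projIcc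

private lemma π_of_nonpos {r : ℝ} (h : r ≤ 0) : π r = 0 := by
  apply Subtype.ext
  show ((Set.projIcc (0:ℝ) 1 zero_le_one r : ℝ)) = ((0 : I) : ℝ)
  rw [Set.coe_projIcc]
  have h1 : min (1:ℝ) r ≤ 0 := le_trans (min_le_right _ _) h
  simp [max_eq_left h1]

private lemma π_of_one_le {r : ℝ} (h : 1 ≤ r) : π r = 1 := by
  apply Subtype.ext
  show ((Set.projIcc (0:ℝ) 1 zero_le_one r : ℝ)) = ((1 : I) : ℝ)
  rw [Set.coe_projIcc, min_eq_left h]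
  simp

/-- **Lemma 5.** If `W ⊆ U₁ ⊆ U₂` are open subsets of a completely regular space `X` and
`W` contracts to a point `p₀ ∈ W` in `U₁` fixing `p₀`, and `U₁` contracts to a point in
`U₂`, then `U₁` contracts to `p₀` in `U₂` fixing `p₀`. -/
theorem contraction_upgrade_fixing_point
    {X : Type*} [TopologicalSpace X] [CompletelyRegularSpace X]
    (W U₁ U₂ : Set X) (hW : IsOpen W) (hU₁ : IsOpen U₁) (hU₂ : IsOpen U₂)
    (hWU₁ : W ⊆ U₁) (hU₁U₂ : U₁ ⊆ U₂)
    (p₀ : X) (hp₀ : p₀ ∈ W)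
    (f : W × I → X) (hf : Continuous f)
    (hf0 : ∀ x : W, f (x, 0) = (x : X))
    (hf1 : ∀ x : W, f (x, 1) = p₀)
    (hfp : ∀ t : I, f (⟨p₀, hp₀⟩, t) = p₀)
    (hfU₁ : ∀ z, f z ∈ U₁)
    (g : U₁ × I → X) (hg : Continuous g)
    (hg0 : ∀ x : U₁, g (x, 0) = (x : X))
    (hg1 : ∃ q : X, ∀ x : U₁, g (x, 1) = q)
    (hgU₂ : ∀ z, g z ∈ U₂) :
    ∃ h : U₁ × I → X, Continuous h ∧
      (∀ x : U₁, h (x, 0) = (x : X)) ∧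
      (∀ x : U₁, h (x, 1) = p₀) ∧
      (∀ t : I, h (⟨p₀, hWU₁ hp₀⟩, t) = p₀) ∧
      (∀ z, h z ∈ U₂) := by
  classical
  obtain ⟨q, hq⟩ := hg1
  -- Urysohn-type function from complete regularity
  obtain ⟨u, hu, hup, huW⟩ :=
    CompletelyRegularSpace.completely_regular p₀ Wᶜ hW.isClosed_compl (by simp [hp₀])
  obtain ⟨φ, hφc, hφp, hφW⟩ : ∃ φ : X → ℝ, Continuous φ ∧ φ p₀ = 1 ∧
      (∀ x, x ∉ W → φ x = 0) := by
    refine ⟨fun x => 1 - (u x : ℝ),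
      continuous_const.sub (continuous_subtype_val.comp hu), by simp [hup], ?_⟩
    intro x hx
    have h1 : u x = 1 := huW hx
    simp [h1]
  have hφpos : ∀ x, 0 < φ x → x ∈ W := by
    intro x h
    by_contra hx
    rw [hφW x hx] at h
    exact lt_irrefl _ h
  set half : I := ⟨1/2, by norm_num, by norm_num⟩ with hhalf
  set P₀ : U₁ := ⟨p₀, hWU₁ hp₀⟩ with hP₀
  -- Stage 1: the extension of (a reparametrized) f to U₁, "f̂".
  have hFex : ∃ F : U₁ × I → X, Continuous F ∧
      (∀ x : U₁, F (x, 0) = (x : X)) ∧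
      (∀ t : I, F (P₀, t) = p₀) ∧
      (∀ z, F z ∈ U₁) ∧
      (∀ x : U₁, 2/3 < φ (x : X) → F (x, half) = p₀) := by
    set arg : U₁ × I → ℝ := fun z => (2 * (z.2 : ℝ)) * max 0 (3 * φ (z.1 : X) - 1)
      with harg
    have hargc : Continuous arg := by
      apply Continuous.mul
      · exact (continuous_const.mul (continuous_subtype_val.comp continuous_snd))
      · exact continuous_const.max
          ((continuous_const.mul (hφc.comp (continuous_subtype_val.comp continuous_fst))).sub
            continuous_const)
    refine ⟨fun z => if h : (z.1 : X) ∈ W then f (⟨(z.1 : X), h⟩, π (arg z)) else (z.1 : X),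
      ?_, ?_, ?_, ?_, ?_⟩
    · -- continuity by gluing
      set S : Set (U₁ × I) := {z | (z.1 : X) ∈ W} with hS
      set T : Set (U₁ × I) := {z | φ (z.1 : X) < 1/3} with hT
      have hSopen : IsOpen S := hW.preimage (continuous_subtype_val.comp continuous_fst)
      have hTopen : IsOpen T :=
        isOpen_lt (hφc.comp (continuous_subtype_val.comp continuous_fst)) continuous_const
      apply glue_open₂ (b1 := fun z =>
          if h : (z.1 : X) ∈ W then f (⟨(z.1 : X), h⟩, π (arg z)) else (z.1 : X))
        (b2 := fun z => (z.1 : X)) hSopen hTopen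
      · -- continuous on S
        rw [continuousOn_iff_continuous_restrict]
        have hres : S.restrict (fun z : U₁ × I =>
            if h : (z.1 : X) ∈ W then f (⟨(z.1 : X), h⟩, π (arg z)) else (z.1 : X)) =
            fun w : S => f (⟨((w : U₁ × I).1 : X), w.2⟩, π (arg (w : U₁ × I))) := by
          funext w
          exact dif_pos w.2
        change Continuous (S.restrict (fun z : U₁ × I =>
            if h : (z.1 : X) ∈ W then f (⟨(z.1 : X), h⟩, π (arg z)) else (z.1 : X))); rw [hres]
        apply hf.comp
        apply Continuous.prodMk
        · exact Continuous.subtype_mk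
            (continuous_subtype_val.comp (continuous_fst.comp continuous_subtype_val)) _
        · exact π_cont.comp (hargc.comp continuous_subtype_val)
      · exact (continuous_subtype_val.comp continuous_fst).continuousOn
      · intro z _; rfl
      · -- on T the function equals z.1
        intro z hz
        by_cases hzW : (z.1 : X) ∈ W
        · beta_reduce; rw [dif_pos hzW]
          have hm : max 0 (3 * φ (z.1 : X) - 1) = 0 := by
            apply max_eq_left
            have : φ (z.1 : X) < 1/3 := hz
            linarith
          have ha : arg z = 0 := by rw [harg]; simp [hm]
          rw [ha, π_of_nonpos le_rfl]
          exact hf0 _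
        · beta_reduce; rw [dif_neg hzW]
      · -- cover
        intro z
        by_cases hz : φ (z.1 : X) < 1/3
        · exact Or.inr hz
        · exact Or.inl (hφpos _ (by linarith [not_lt.mp hz]))
    · -- F (x,0) = x
      intro x
      by_cases hx : (x : X) ∈ W
      · beta_reduce; rw [dif_pos hx]
        have ha : arg (x, (0:I)) = 0 := by rw [harg]; simp
        rw [ha, π_of_nonpos le_rfl]
        exact hf0 _
      · beta_reduce; rw [dif_neg hx]
    · -- F (p₀, t) = p₀
      intro t
      beta_reduce; rw [dif_pos (show ((P₀ : U₁) : X) ∈ W from hp₀)]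
      exact hfp _
    · -- range in U₁
      intro z
      by_cases hz : (z.1 : X) ∈ W
      · beta_reduce; rw [dif_pos hz]; exact hfU₁ _
      · beta_reduce; rw [dif_neg hz]; exact z.1.2
    · -- F (x, half) = p₀ when φ x > 2/3
      intro x hx
      have hxW : (x : X) ∈ W := hφpos _ (by linarith)
      beta_reduce; rw [dif_pos hxW]
      have hm : max 0 (3 * φ (x : X) - 1) = 3 * φ (x : X) - 1 :=
        max_eq_right (by linarith)
      have ha : arg (x, half) = 3 * φ (x : X) - 1 := by
        rw [harg]
        show (2 : ℝ) * (1/2) * (max 0 (3 * φ (x : X) - 1)) = 3 * φ (x : X) - 1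
        rw [hm]; ring
      rw [ha, π_of_one_le (by linarith)]
      exact hf1 _
  obtain ⟨F, hFc, hF0, hFp, hFU₁, hFhalf⟩ := hFex
  -- Stage 2 ingredient: contraction of U₁ to p₀ in U₂ (not fixing p₀): g then reverse.
  have hHex : ∃ H : U₁ × I → X, Continuous H ∧
      (∀ y : U₁, H (y, 0) = (y : X)) ∧
      (∀ y : U₁, H (y, 1) = p₀) ∧
      (∀ z, H z ∈ U₂) ∧
      (∀ s : I, H (P₀, s) = g (P₀, π (min (2 * (s : ℝ)) (2 - 2 * (s : ℝ))))) := by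
    refine ⟨fun z => if (z.2 : ℝ) ≤ 1/2 then g (z.1, π (2 * (z.2 : ℝ)))
        else g (P₀, π (2 - 2 * (z.2 : ℝ))), ?_, ?_, ?_, ?_, ?_⟩
    · apply Continuous.if_le
      · exact hg.comp (continuous_fst.prodMk
          (π_cont.comp (continuous_const.mul (continuous_subtype_val.comp continuous_snd))))
      · exact hg.comp (continuous_const.prodMk
          (π_cont.comp (continuous_const.sub
            (continuous_const.mul (continuous_subtype_val.comp continuous_snd)))))
      · exact continuous_subtype_val.comp continuous_snd
      · exact continuous_const
      · intro z hz
        rw [hz]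
        have h1 : π (2 * (1/2 : ℝ)) = 1 := π_of_one_le (by norm_num)
        have h2 : π (2 - 2 * (1/2 : ℝ)) = 1 := π_of_one_le (by norm_num)
        rw [h1, h2, hq z.1, hq P₀]
    · intro y
      beta_reduce; rw [if_pos (by norm_num : ((0:I) : ℝ) ≤ 1/2)]
      have h1 : π (2 * ((0:I) : ℝ)) = 0 := by rw [show ((0:I):ℝ) = 0 from rfl]; exact π_of_nonpos (by norm_num)
      rw [h1]
      exact hg0 y
    · intro y
      beta_reduce; rw [if_neg (by norm_num : ¬ ((1:I) : ℝ) ≤ 1/2)]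
      have h1 : π (2 - 2 * ((1:I) : ℝ)) = 0 := by
        rw [show ((1:I):ℝ) = 1 from rfl]; exact π_of_nonpos (by norm_num)
      rw [h1]
      exact hg0 P₀
    · intro z
      by_cases hz : (z.2 : ℝ) ≤ 1/2
      · beta_reduce; rw [if_pos hz]; exact hgU₂ _
      · beta_reduce; rw [if_neg hz]; exact hgU₂ _
    · intro s
      by_cases hs : (s : ℝ) ≤ 1/2
      · beta_reduce; rw [if_pos hs]
        show g (P₀, π (2 * (s:ℝ))) = g (P₀, π (min (2*(s:ℝ)) (2 - 2*(s:ℝ))))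
        rw [min_eq_left (by linarith)]
      · beta_reduce; rw [if_neg hs]
        show g (P₀, π (2 - 2*(s:ℝ))) = g (P₀, π (min (2*(s:ℝ)) (2 - 2*(s:ℝ))))
        rw [min_eq_right (by linarith [not_le.mp hs])]
  obtain ⟨H, hHc, hH0, hH1, hHU₂, hHp⟩ := hHex
  -- the retraction-like map r
  set R : U₁ → U₁ := fun x => ⟨F (x, half), hFU₁ _⟩ with hR
  have hRc : Continuous R :=
    Continuous.subtype_mk (hFc.comp (continuous_id.prodMk continuous_const)) _
  have hRp : ∀ x : U₁, 2/3 < φ (x : X) → R x = P₀ := by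
    intro x hx
    apply Subtype.ext
    exact hFhalf x hx
  -- Stage 2: D contracts U₁ to p₀ in U₂ from F(·, half), fixing p₀.
  set χ : X → ℝ := fun x => max 0 (6 * φ x - 5) with hχ
  have hχc : Continuous χ := continuous_const.max ((continuous_const.mul hφc).sub continuous_const)
  have hDex : ∃ D : U₁ × I → X, Continuous D ∧
      (∀ x : U₁, D (x, 0) = F (x, half)) ∧
      (∀ x : U₁, D (x, 1) = p₀) ∧
      (∀ s : I, D (P₀, s) = p₀) ∧
      (∀ z, D z ∈ U₂) := by
    set A : U₁ × I → X := fun z =>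
      g (P₀, π ((1 - χ (z.1 : X)) * min (2 * (z.2 : ℝ)) (2 - 2 * (z.2 : ℝ)))) with hA
    have hAc : Continuous A := by
      apply hg.comp
      apply continuous_const.prodMk
      apply π_cont.comp
      apply Continuous.mul
      · exact continuous_const.sub (hχc.comp (continuous_subtype_val.comp continuous_fst))
      · exact Continuous.min
          (continuous_const.mul (continuous_subtype_val.comp continuous_snd))
          (continuous_const.sub (continuous_const.mul (continuous_subtype_val.comp continuous_snd)))
    refine ⟨fun z => if φ (z.1 : X) < 5/6 then H (R z.1, z.2) else A z, ?_, ?_, ?_, ?_, ?_⟩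
    · -- continuity by gluing
      set S : Set (U₁ × I) := {z | φ (z.1 : X) < 5/6} with hS
      set T : Set (U₁ × I) := {z | 2/3 < φ (z.1 : X)} with hT
      have hSopen : IsOpen S :=
        isOpen_lt (hφc.comp (continuous_subtype_val.comp continuous_fst)) continuous_const
      have hTopen : IsOpen T :=
        isOpen_lt continuous_const (hφc.comp (continuous_subtype_val.comp continuous_fst))
      apply glue_open₂ (b1 := fun z => H (R z.1, z.2)) (b2 := A) hSopen hTopen
      · exact (hHc.comp ((hRc.comp continuous_fst).prodMk continuous_snd)).continuousOn
      · exact hAc.continuousOn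
      · intro z hz; beta_reduce; exact if_pos hz
      · intro z hz
        by_cases hz5 : φ (z.1 : X) < 5/6
        · beta_reduce; rw [if_pos hz5]
          have hχ0 : χ (z.1 : X) = 0 := max_eq_left (by
            have : φ (z.1 : X) < 5/6 := hz5
            linarith)
          have hRz : R z.1 = P₀ := hRp z.1 hz
          rw [hRz, hHp z.2, hA]
          simp only [hχ0]
          norm_num
        · beta_reduce; rw [if_neg hz5]
      · intro z
        by_cases hz : φ (z.1 : X) < 5/6
        · exact Or.inl hz
        · exact Or.inr (by show 2/3 < φ (z.1 : X); linarith [not_lt.mp hz])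
    · -- D (x, 0) = F (x, half)
      intro x
      by_cases hx : φ (x : X) < 5/6
      · beta_reduce; rw [if_pos hx]
        exact hH0 (R x)
      · beta_reduce; rw [if_neg hx]
        have h1 : min (2 * ((0:I) : ℝ)) (2 - 2 * ((0:I) : ℝ)) = 0 := by
          rw [show ((0:I):ℝ) = 0 from rfl]; norm_num
        rw [hA]
        simp only [h1, mul_zero, π_of_nonpos le_rfl]
        rw [hg0 P₀]
        exact (hFhalf x (by linarith [not_lt.mp hx])).symm
    · -- D (x, 1) = p₀
      intro x
      by_cases hx : φ (x : X) < 5/6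
      · beta_reduce; rw [if_pos hx]
        exact hH1 (R x)
      · beta_reduce; rw [if_neg hx]
        have h1 : min (2 * ((1:I) : ℝ)) (2 - 2 * ((1:I) : ℝ)) = 0 := by
          rw [show ((1:I):ℝ) = 1 from rfl]; norm_num
        rw [hA]
        simp only [h1, mul_zero, π_of_nonpos le_rfl]
        exact hg0 P₀
    · -- D (p₀, s) = p₀
      intro s
      have hφP : φ ((P₀ : U₁) : X) = 1 := hφp
      beta_reduce; rw [if_neg (by rw [hφP]; norm_num)]
      have hχ1 : χ ((P₀ : U₁) : X) = 1 := by
        rw [hχ]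
        show max 0 (6 * φ (p₀ : X) - 5) = 1
        rw [hφp]; norm_num
      rw [hA]
      simp only [hχ1, sub_self, zero_mul, π_of_nonpos le_rfl]
      exact hg0 P₀
    · -- range in U₂
      intro z
      by_cases hz : φ (z.1 : X) < 5/6
      · beta_reduce; rw [if_pos hz]; exact hHU₂ _
      · beta_reduce; rw [if_neg hz]; exact hgU₂ _
  obtain ⟨D, hDc, hD0, hD1, hDp, hDU₂⟩ := hDex
  -- Final homotopy: F on [0,1/2] then D on [1/2,1].
  refine ⟨fun z => if (z.2 : ℝ) ≤ 1/2 then F z else D (z.1, π (2 * (z.2 : ℝ) - 1)),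
    ?_, ?_, ?_, ?_, ?_⟩
  · apply Continuous.if_le
    · exact hFc
    · exact hDc.comp (continuous_fst.prodMk (π_cont.comp
        ((continuous_const.mul (continuous_subtype_val.comp continuous_snd)).sub
          continuous_const)))
    · exact continuous_subtype_val.comp continuous_snd
    · exact continuous_const
    · intro z hz
      have h0 : (2 : ℝ) * (z.2 : ℝ) - 1 ≤ 0 := by rw [hz]; norm_num
      have hz2 : z.2 = half := Subtype.ext hz
      rw [π_of_nonpos h0, hD0 z.1, ← hz2]
  · intro x
    beta_reduce; rw [if_pos (by norm_num : ((0:I) : ℝ) ≤ 1/2)]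
    exact hF0 x
  · intro x
    beta_reduce; rw [if_neg (by norm_num : ¬ ((1:I) : ℝ) ≤ 1/2)]
    have h1 : π (2 * ((1:I) : ℝ) - 1) = 1 := by
      rw [show ((1:I):ℝ) = 1 from rfl]; exact π_of_one_le (by norm_num)
    rw [h1]
    exact hD1 x
  · intro t
    by_cases ht : (t : ℝ) ≤ 1/2
    · beta_reduce; rw [if_pos ht]; exact hFp t
    · beta_reduce; rw [if_neg ht]; exact hDp _
  · intro z
    by_cases hz : (z.2 : ℝ) ≤ 1/2
    · beta_reduce; rw [if_pos hz]; exact hU₁U₂ (hFU₁ z)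
    · beta_reduce; rw [if_neg hz]; exact hDU₂ _
end

section
/- If a normal space X is the union of a sequence of open subsets U_1, U_2, ... with cl(U_n) ⊆ U_{n+1} and each U_n contracting to a point in U_{n+1}, and moreover there exists an open subset V of X that contracts to a point p_0 ∈ V within X fixing p_0, then X is contractible. -/
open unitInterval Set

namespace MUC

open scoped Classical

noncomputable def clamp : ℝ → I := Set.projIcc 0 1 zero_le_one

lemma continuous_clamp : Continuous clamp := continuous_projIcc

lemma coe_clamp (r : ℝ) : (clamp r : ℝ) = max 0 (min 1 r) := rfl

lemma clamp_of_nonpos {r : ℝ} (h : r ≤ 0) : clamp r = 0 :=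
  _root_.projIcc_eq_zero.2 h

lemma clamp_zero : clamp 0 = 0 := clamp_of_nonpos le_rfl

lemma clamp_of_one_le {r : ℝ} (h : 1 ≤ r) : clamp r = 1 :=
  _root_.projIcc_eq_one.2 h

/-- Glue lemma : continuity from a locally finite closed cover. -/
lemma continuous_of_closed_cover {α β : Type*} [TopologicalSpace α] [TopologicalSpace β]
    {ι : Type*} {f : α → β} (s : ι → Set α) (hLF : LocallyFinite s)
    (hcl : ∀ i, IsClosed (s i)) (hcov : ∀ x, ∃ i, x ∈ s i)
    (hcont : ∀ i, ContinuousOn f (s i)) : Continuous f := by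
  rw [continuous_iff_isClosed]
  intro C hC
  have he : f ⁻¹' C = ⋃ i, (s i ∩ f ⁻¹' C) := by
    ext x
    constructor
    · intro hx
      obtain ⟨i, hi⟩ := hcov x
      exact mem_iUnion.2 ⟨i, hi, hx⟩
    · rintro hx
      obtain ⟨i, -, hx⟩ := mem_iUnion.1 hx
      exact hx
  rw [he]
  exact (hLF.subset fun i => inter_subset_left).isClosed_iUnion
    fun i => (hcont i).preimage_isClosed_of_isClosed (hcl i) hC

/-- All the data needed for the telescope contraction. -/
structure Data (X : Type*) [TopologicalSpace X] where
  W : ℕ → Set X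
  pt : X
  hopen : ∀ n, IsOpen (W n)
  hcl : ∀ n, closure (W n) ⊆ W (n + 1)
  hunion : ∀ x, ∃ n, x ∈ W n
  hpt : pt ∈ W 0
  f : ∀ n, (W n) × I → X
  hfc : ∀ n, Continuous (f n)
  hf0 : ∀ n x, f n (x, 0) = (x : X)
  p : ℕ → X
  hf1 : ∀ n x, f n (x, 1) = p n
  hfW : ∀ n z, f n z ∈ W (n + 1)
  θ : ℕ → X → ℝ
  hθc : ∀ n, Continuous (θ n)
  hθz : ∀ x, θ 0 x = 0
  hθ1 : ∀ n x, x ∈ closure (W n) → θ (n + 1) x = 1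
  hθout : ∀ n x, x ∉ W (n + 1) → θ (n + 1) x = 0

namespace Data

variable {X : Type*} [TopologicalSpace X] (d : Data X)

lemma mono_succ (n : ℕ) : d.W n ⊆ d.W (n + 1) :=
  subset_closure.trans (d.hcl n)

lemma mono {m n : ℕ} (h : m ≤ n) : d.W m ⊆ d.W n := by
  induction n with
  | zero => simpa [Nat.le_zero.1 h] using subset_rfl
  | succ k ih =>
    rcases Nat.lt_or_ge m (k + 1) with h' | h'
    · exact (ih (Nat.lt_succ_iff.1 h')).trans (d.mono_succ k)
    · have : m = k + 1 := le_antisymm h h'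
      simp [this]

lemma ptW (n : ℕ) : d.pt ∈ d.W n := d.mono (Nat.zero_le n) d.hpt

lemma theta_pos {n : ℕ} {x : X} (h : d.θ (n + 1) x ≠ 0) : x ∈ d.W (n + 1) := by
  by_contra hx
  exact h (d.hθout n x hx)

lemma theta_next {n : ℕ} {x : X} (h : d.θ n x ≠ 0) : d.θ (n + 1) x = 1 := by
  cases n with
  | zero => exact absurd (d.hθz x) h
  | succ k => exact d.hθ1 _ x (subset_closure (d.theta_pos h))

lemma theta_late {k m : ℕ} {x : X} (hx : x ∈ d.W k) (hm : k + 1 ≤ m) : d.θ m x = 1 := by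
  obtain ⟨j, rfl⟩ : ∃ j, m = j + 1 := ⟨m - 1, by omega⟩
  exact d.hθ1 j x (subset_closure (d.mono (by omega) hx))

/-- The basic contraction of `W n` to `pt` inside `W (n+1)` :
first use `f n` to contract to `p n`, then run backwards along the track of `pt`. -/
noncomputable def Dsub (n : ℕ) : (d.W n) × ℝ → X := fun q =>
  d.f n ((if q.2 ≤ 1 / 2 then q.1 else ⟨d.pt, d.ptW n⟩),
    clamp (min (2 * q.2) (2 - 2 * q.2)))

lemma Dsub_cont (n : ℕ) : Continuous (d.Dsub n) := by
  have hrw : d.Dsub n = fun q : (d.W n) × ℝ =>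
      if q.2 ≤ 1 / 2 then d.f n (q.1, clamp (min (2 * q.2) (2 - 2 * q.2)))
      else d.f n (⟨d.pt, d.ptW n⟩, clamp (min (2 * q.2) (2 - 2 * q.2))) := by
    funext q
    exact apply_ite (fun y => d.f n (y, clamp (min (2 * q.2) (2 - 2 * q.2)))) _ _ _
  rw [hrw]
  have harg : Continuous fun q : (d.W n) × ℝ => clamp (min (2 * q.2) (2 - 2 * q.2)) :=
    continuous_clamp.comp ((continuous_const.mul continuous_snd).min
      (continuous_const.sub (continuous_const.mul continuous_snd)))
  have h1 : Continuous fun q : (d.W n) × ℝ =>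
      d.f n (q.1, clamp (min (2 * q.2) (2 - 2 * q.2))) :=
    (d.hfc n).comp (continuous_fst.prodMk harg)
  have h2 : Continuous fun q : (d.W n) × ℝ =>
      d.f n (⟨d.pt, d.ptW n⟩, clamp (min (2 * q.2) (2 - 2 * q.2))) :=
    (d.hfc n).comp (continuous_const.prodMk harg)
  exact Continuous.if_le (f := fun q : (d.W n) × ℝ => q.2)
    (g := fun _ : (d.W n) × ℝ => (1 / 2 : ℝ)) h1 h2 continuous_snd continuous_const
    (by
      intro q hq
      have hc : clamp (min (2 * q.2) (2 - 2 * q.2)) = 1 := by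
        rw [hq]; norm_num
        exact clamp_of_one_le (by norm_num)
      simp only [hc, d.hf1 n])

lemma Dsub_zero (n : ℕ) (y : d.W n) : d.Dsub n (y, 0) = y := by
  unfold Dsub
  rw [if_pos (by norm_num : (0 : ℝ) ≤ 1 / 2)]
  have : clamp (min (2 * (0 : ℝ)) (2 - 2 * 0)) = 0 := by
    rw [show min (2 * (0 : ℝ)) (2 - 2 * 0) = 0 by norm_num]
    exact clamp_zero
  rw [this, d.hf0 n]

lemma Dsub_one (n : ℕ) (y : d.W n) : d.Dsub n (y, 1) = d.pt := by
  unfold Dsub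
  rw [if_neg (by norm_num : ¬ (1 : ℝ) ≤ 1 / 2)]
  have : clamp (min (2 * (1 : ℝ)) (2 - 2 * 1)) = 0 := by
    rw [show min (2 * (1 : ℝ)) (2 - 2 * 1) = 0 by norm_num]
    exact clamp_zero
  rw [this, d.hf0 n]

lemma Dsub_mem (n : ℕ) (q : (d.W n) × ℝ) : d.Dsub n q ∈ d.W (n + 1) := d.hfW n _

lemma Dsub_pt (n : ℕ) (h : d.pt ∈ d.W n) (s : ℝ) :
    d.Dsub n (⟨d.pt, h⟩, s) = d.f n (⟨d.pt, d.ptW n⟩, clamp (min (2 * s) (2 - 2 * s))) := by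
  unfold Dsub
  congr 1
  split <;> rfl

/-- Extension of `Dsub` to all of `X` by the identity (junk values off `W n`). -/
noncomputable def Dext (n : ℕ) : X × ℝ → X := fun q =>
  if h : q.1 ∈ d.W n then d.Dsub n (⟨q.1, h⟩, q.2) else q.1

lemma Dext_zero (n : ℕ) (y : X) : d.Dext n (y, 0) = y := by
  unfold Dext
  split
  · exact d.Dsub_zero n _
  · rfl

lemma Dext_mem (n : ℕ) {y : X} (h : y ∈ d.W n) (s : ℝ) : d.Dext n (y, s) ∈ d.W (n + 1) := by
  unfold Dext
  rw [dif_pos h]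
  exact d.Dsub_mem n _

lemma Dext_one (n : ℕ) {y : X} (h : y ∈ d.W n) : d.Dext n (y, 1) = d.pt := by
  unfold Dext
  rw [dif_pos h]
  exact d.Dsub_one n _

end Data

namespace Data

variable {X : Type*} [TopologicalSpace X] (d : Data X)

/-- Body of the stage-`(n+1)` homotopy, given the position map `g = h n` accumulated so far. -/
noncomputable def stageBody (n : ℕ) (g : X → X) : X × ℝ → X := fun q =>
  if d.θ n q.1 ≤ 2 / 3 then
    d.Dext (n + 1) (g q.1, (clamp (3 * d.θ (n + 1) q.1 - 1) : ℝ) * q.2)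
  else
    d.f (n + 1) (⟨d.pt, d.ptW (n + 1)⟩,
      clamp ((clamp (3 - 3 * d.θ n q.1) : ℝ) * min (2 * q.2) (2 - 2 * q.2)))

/-- Position after `n` stages. -/
noncomputable def h (d : Data X) : ℕ → X → X
  | 0 => id
  | n + 1 => fun x => d.stageBody n (h d n) (x, 1)

/-- The stage-`n` homotopy (for `n = 0` a dummy). -/
noncomputable def S : ℕ → X × ℝ → X
  | 0 => fun q => q.1
  | n + 1 => d.stageBody n (d.h n)

lemma S_one (n : ℕ) (x : X) : d.S (n + 1) (x, 1) = d.h (n + 1) x := by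
  simp only [S, h]

end Data

namespace Data

variable {X : Type*} [TopologicalSpace X] (d : Data X)

lemma coeI_zero : ((0 : I) : ℝ) = 0 := rfl
lemma coeI_one : ((1 : I) : ℝ) = 1 := rfl

lemma S_done (n : ℕ) (x : X) (τ : ℝ) (hx : d.θ n x = 1) : d.S (n + 1) (x, τ) = d.pt := by
  show d.stageBody n (d.h n) (x, τ) = d.pt
  simp only [stageBody]
  rw [if_neg (by rw [hx]; norm_num)]
  have h1 : clamp (3 - 3 * d.θ n x) = 0 := by
    rw [hx]
    exact clamp_of_nonpos (by norm_num)
  rw [h1, coeI_zero, zero_mul, clamp_zero, d.hf0]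

lemma S_zero (n : ℕ) (x : X) (hfix : 2 / 3 ≤ d.θ n x → d.h n x = d.pt) :
    d.S (n + 1) (x, 0) = d.h n x := by
  show d.stageBody n (d.h n) (x, 0) = d.h n x
  simp only [stageBody]
  split
  · rw [mul_zero]
    exact d.Dext_zero _ _
  · rename_i hneg
    rw [show min (2 * (0 : ℝ)) (2 - 2 * 0) = 0 by norm_num, mul_zero, clamp_zero, d.hf0]
    exact (hfix (by linarith [not_le.1 hneg])).symm

lemma main_induction : ∀ n : ℕ, Continuous (d.h n) ∧
    (∀ x, d.h n x = x ∨ d.h n x ∈ d.W (n + 1)) ∧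
    (∀ x, 2 / 3 ≤ d.θ n x → d.h n x = d.pt) ∧
    Continuous (d.S n) := by
  intro n
  induction n with
  | zero =>
    refine ⟨continuous_id, fun x => Or.inl rfl, fun x hx => ?_, continuous_fst⟩
    · rw [d.hθz x] at hx; norm_num at hx
  | succ n ih =>
    obtain ⟨hc, hinv, hfix, -⟩ := ih
    -- continuity of the (n+1)-st stage
    have hSc : Continuous (d.S (n + 1)) := by
      set P₁ : Set (X × ℝ) := {q | d.θ n q.1 ≤ 2 / 3 ∧ d.θ (n + 1) q.1 ≤ 1 / 3} with hP₁
      set P₂ : Set (X × ℝ) := {q | d.θ n q.1 ≤ 2 / 3 ∧ 1 / 3 ≤ d.θ (n + 1) q.1} with hP₂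
      set P₃ : Set (X × ℝ) := {q | 2 / 3 ≤ d.θ n q.1} with hP₃
      have hθnc : Continuous fun q : X × ℝ => d.θ n q.1 := (d.hθc n).comp continuous_fst
      have hθn1c : Continuous fun q : X × ℝ => d.θ (n + 1) q.1 :=
        (d.hθc (n + 1)).comp continuous_fst
      have hcl1 : IsClosed P₁ :=
        (isClosed_le hθnc continuous_const).inter (isClosed_le hθn1c continuous_const)
      have hcl2 : IsClosed P₂ :=
        (isClosed_le hθnc continuous_const).inter (isClosed_le continuous_const hθn1c)
      have hcl3 : IsClosed P₃ := isClosed_le continuous_const hθnc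
      -- continuity on P₁
      have hco1 : ContinuousOn (d.S (n + 1)) P₁ := by
        have heq : EqOn (d.S (n + 1)) (fun q : X × ℝ => d.h n q.1) P₁ := by
          rintro ⟨x, τ⟩ ⟨hq1, hq2⟩
          show d.stageBody n (d.h n) (x, τ) = d.h n x
          simp only [stageBody]
          rw [if_pos hq1]
          have : clamp (3 * d.θ (n + 1) x - 1) = 0 := clamp_of_nonpos (by linarith)
          rw [this, coeI_zero, zero_mul]
          exact d.Dext_zero _ _
        exact (hc.comp continuous_fst).continuousOn.congr heq
      -- continuity on P₂
      have hmem : ∀ q : X × ℝ, q ∈ P₂ → d.h n q.1 ∈ d.W (n + 1) := by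
        rintro ⟨x, τ⟩ ⟨-, hq2⟩
        have hx : x ∈ d.W (n + 1) := by
          refine d.theta_pos (fun h0 => ?_)
          rw [h0] at hq2; norm_num at hq2
        rcases hinv x with he | hm
        · rwa [he]
        · exact hm
      have hco2 : ContinuousOn (d.S (n + 1)) P₂ := by
        rw [continuousOn_iff_continuous_restrict]
        have heq : P₂.domRestrict (d.S (n + 1)) = fun q : P₂ =>
            d.Dsub (n + 1) (⟨d.h n (q : X × ℝ).1, hmem _ q.2⟩,
              (clamp (3 * d.θ (n + 1) (q : X × ℝ).1 - 1) : ℝ) * (q : X × ℝ).2) := by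
          funext q
          obtain ⟨⟨x, τ⟩, hq⟩ := q
          show d.stageBody n (d.h n) (x, τ) = _
          simp only [stageBody, Dext]
          rw [if_pos hq.1, dif_pos (hmem _ hq)]
        rw [heq]
        refine (d.Dsub_cont (n + 1)).comp (Continuous.prodMk ?_ ?_)
        · exact Continuous.subtype_mk
            (hc.comp (continuous_fst.comp continuous_subtype_val)) _
        · refine Continuous.mul ?_ (continuous_snd.comp continuous_subtype_val)
          exact continuous_subtype_val.comp (continuous_clamp.comp
            (((continuous_const.mul ((d.hθc (n + 1)).comp
              (continuous_fst.comp continuous_subtype_val))).sub continuous_const)))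
      -- continuity on P₃
      have hco3 : ContinuousOn (d.S (n + 1)) P₃ := by
        have hBc : Continuous fun q : X × ℝ => d.f (n + 1) (⟨d.pt, d.ptW (n + 1)⟩,
            clamp ((clamp (3 - 3 * d.θ n q.1) : ℝ) * min (2 * q.2) (2 - 2 * q.2))) := by
          refine (d.hfc (n + 1)).comp (continuous_const.prodMk (continuous_clamp.comp ?_))
          refine Continuous.mul ?_ ?_
          · exact continuous_subtype_val.comp (continuous_clamp.comp
              (continuous_const.sub (continuous_const.mul hθnc)))
          · exact (continuous_const.mul continuous_snd).min
              (continuous_const.sub (continuous_const.mul continuous_snd))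
        have heq : EqOn (d.S (n + 1)) (fun q : X × ℝ => d.f (n + 1) (⟨d.pt, d.ptW (n + 1)⟩,
            clamp ((clamp (3 - 3 * d.θ n q.1) : ℝ) * min (2 * q.2) (2 - 2 * q.2)))) P₃ := by
          rintro ⟨x, τ⟩ hq
          have hq' : 2 / 3 ≤ d.θ n x := hq
          show d.stageBody n (d.h n) (x, τ) = d.f (n + 1) (⟨d.pt, d.ptW (n + 1)⟩,
            clamp ((clamp (3 - 3 * d.θ n x) : ℝ) * min (2 * τ) (2 - 2 * τ)))
          simp only [stageBody]
          rcases eq_or_lt_of_le hq' with hEq | hLt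
          · rw [if_pos (le_of_eq hEq.symm)]
            have hpt : d.h n x = d.pt := hfix x hq'
            have hθ1 : d.θ (n + 1) x = 1 := d.theta_next (by rw [← hEq]; norm_num)
            have ha : clamp (3 * d.θ (n + 1) x - 1) = 1 := by
              rw [hθ1]
              exact clamp_of_one_le (by norm_num)
            have hb : clamp (3 - 3 * d.θ n x) = 1 := by
              rw [← hEq]
              exact clamp_of_one_le (by norm_num)
            rw [ha, coeI_one, one_mul, hb, coeI_one, one_mul, hpt]
            simp only [Dext]
            rw [dif_pos (d.ptW (n + 1))]
            exact d.Dsub_pt (n + 1) _ τ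
          · rw [if_neg (not_le.2 hLt)]
        exact hBc.continuousOn.congr heq
      -- glue
      refine continuous_of_closed_cover (ι := Fin 3) ![P₁, P₂, P₃]
        (locallyFinite_of_finite _) ?_ ?_ ?_
      · intro i
        fin_cases i <;> [exact hcl1; exact hcl2; exact hcl3]
      · intro q
        rcases le_or_gt (d.θ n q.1) (2 / 3) with h1 | h1
        · rcases le_or_gt (d.θ (n + 1) q.1) (1 / 3) with h2 | h2
          · exact ⟨0, h1, h2⟩
          · exact ⟨1, h1, h2.le⟩
        · exact ⟨2, h1.le⟩
      · intro i
        fin_cases i <;> [exact hco1; exact hco2; exact hco3]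
    -- now the three properties of h (n+1)
    have hc' : Continuous (d.h (n + 1)) := by
      have : d.h (n + 1) = fun x => d.S (n + 1) (x, 1) := rfl
      rw [this]
      exact hSc.comp (continuous_id.prodMk continuous_const)
    refine ⟨hc', ?_, ?_, hSc⟩
    · intro x
      show d.stageBody n (d.h n) (x, 1) = x ∨ d.stageBody n (d.h n) (x, 1) ∈ d.W (n + 1 + 1)
      simp only [stageBody]
      split
      · simp only [Dext]
        split
        · exact Or.inr (d.Dsub_mem _ _)
        · rename_i hnot
          rcases hinv x with he | hm
          · exact Or.inl he
          · exact absurd hm hnot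
      · exact Or.inr (d.hfW _ _)
    · intro x hx
      show d.stageBody n (d.h n) (x, 1) = d.pt
      simp only [stageBody]
      split
      · have ha : clamp (3 * d.θ (n + 1) x - 1) = 1 := clamp_of_one_le (by linarith)
        rw [ha, coeI_one, one_mul]
        have hxW : x ∈ d.W (n + 1) := d.theta_pos (fun h0 => by rw [h0] at hx; norm_num at hx)
        have hmem' : d.h n x ∈ d.W (n + 1) := by
          rcases hinv x with he | hm
          · rwa [he]
          · exact hm
        exact d.Dext_one _ hmem'
      · rw [show min (2 * (1 : ℝ)) (2 - 2 * 1) = 0 by norm_num, mul_zero, clamp_zero, d.hf0]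

end Data

namespace Data

variable {X : Type*} [TopologicalSpace X] (d : Data X)

/-- The infinite concatenation of the stages, on time `[0,∞)`. -/
noncomputable def G : X × ℝ → X := fun q =>
  if q.2 ≤ 0 then q.1 else d.S ⌈q.2⌉₊ (q.1, q.2 - ((⌈q.2⌉₊ - 1 : ℕ) : ℝ))

lemma G_zero (x : X) : d.G (x, 0) = x := by
  simp only [G]
  rw [if_pos le_rfl]

lemma G_cont : Continuous d.G := by
  set s : ℕ → Set (X × ℝ) := fun n =>
    match n with
    | 0 => univ ×ˢ Iic (0 : ℝ)
    | k + 1 => univ ×ˢ Icc (k : ℝ) ((k : ℝ) + 1) with hs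
  have hLF : LocallyFinite s := by
    rintro ⟨x, r⟩
    refine ⟨univ ×ˢ Ioo (r - 1) (r + 1),
      prod_mem_nhds Filter.univ_mem (Ioo_mem_nhds (by linarith) (by linarith)), ?_⟩
    refine Set.Finite.subset (Set.finite_Iic (⌈r + 1⌉₊)) ?_
    rintro i ⟨⟨y, u⟩, hq1, hq2⟩
    match i with
    | 0 => exact Nat.zero_le _
    | k + 1 =>
      have h1 : (k : ℝ) ≤ u := hq1.2.1
      have h2 : u < r + 1 := hq2.2.2
      have : k < ⌈r + 1⌉₊ := Nat.lt_ceil.2 (lt_of_le_of_lt h1 h2)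
      exact Nat.succ_le_of_lt this
  have hcl : ∀ i, IsClosed (s i) := by
    intro i
    match i with
    | 0 => exact isClosed_univ.prod isClosed_Iic
    | k + 1 => exact isClosed_univ.prod isClosed_Icc
  have hcov : ∀ q : X × ℝ, ∃ i, q ∈ s i := by
    intro q
    rcases le_or_gt q.2 0 with hq | hq
    · exact ⟨0, mem_univ _, hq⟩
    · have hm : 0 < ⌈q.2⌉₊ := Nat.lt_ceil.2 (by exact_mod_cast hq)
      obtain ⟨k, hk⟩ : ∃ k, ⌈q.2⌉₊ = k + 1 := ⟨⌈q.2⌉₊ - 1, by omega⟩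
      refine ⟨k + 1, mem_univ _, ?_, ?_⟩
      · have : (k : ℝ) < q.2 := Nat.lt_ceil.1 (by omega)
        exact this.le
      · have := Nat.le_ceil q.2
        rw [hk] at this
        exact_mod_cast this
  have hcont : ∀ i, ContinuousOn d.G (s i) := by
    intro i
    match i with
    | 0 =>
      have heq : EqOn d.G (fun q : X × ℝ => q.1) (s 0) := by
        rintro ⟨x, r⟩ ⟨-, hr⟩
        have hr' : r ≤ 0 := hr
        show d.G (x, r) = x
        simp only [G]
        rw [if_pos hr']
      exact continuousOn_fst.congr heq
    | k + 1 =>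
      have heq : EqOn d.G (fun q : X × ℝ => d.S (k + 1) (q.1, q.2 - (k : ℝ))) (s (k + 1)) := by
        rintro ⟨x, r⟩ ⟨-, hr'⟩
        have hr1 : (k : ℝ) ≤ r := hr'.1
        have hr2 : r ≤ (k : ℝ) + 1 := hr'.2
        show d.G (x, r) = d.S (k + 1) (x, r - (k : ℝ))
        simp only [G]
        rcases eq_or_lt_of_le hr1 with hEq | hLt
        · -- r = k
          rcases Nat.eq_zero_or_pos k with hk0 | hkpos
          · subst hk0
            have hr0 : r = 0 := by exact_mod_cast hEq.symm
            subst hr0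
            rw [if_pos le_rfl]
            rw [show (0 : ℝ) - ((0 : ℕ) : ℝ) = 0 by norm_num]
            exact (d.S_zero 0 x ((d.main_induction 0).2.2.1 x)).symm
          · obtain ⟨j, rfl⟩ : ∃ j, k = j + 1 := ⟨k - 1, by omega⟩
            have hrpos : (0 : ℝ) < r := by
              rw [← hEq]
              positivity
            rw [if_neg (not_le.2 hrpos)]
            have hceil : ⌈r⌉₊ = j + 1 := by
              rw [← hEq]
              exact_mod_cast Nat.ceil_natCast (j + 1)
            rw [hceil]
            have harg : r - (((j + 1 : ℕ) - 1 : ℕ) : ℝ) = 1 := by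
              rw [← hEq]
              push_cast
              ring
            rw [harg, d.S_one]
            have harg2 : r - (((j + 1 : ℕ) : ℝ)) = 0 := by
              rw [← hEq]
              push_cast
              ring
            rw [harg2]
            exact (d.S_zero (j + 1) x ((d.main_induction (j + 1)).2.2.1 x)).symm
        · -- k < r
          have hrpos : (0 : ℝ) < r := lt_of_le_of_lt (by positivity) hLt
          rw [if_neg (not_le.2 hrpos)]
          have hceil : ⌈r⌉₊ = k + 1 := by
            rw [Nat.ceil_eq_iff (Nat.succ_ne_zero k)]
            constructor
            · simpa using hLt
            · exact_mod_cast hr2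
          rw [hceil]
          norm_num
      exact (((d.main_induction (k + 1)).2.2.2).comp
        (continuous_fst.prodMk (continuous_snd.sub continuous_const))).continuousOn.congr heq
  exact continuous_of_closed_cover s hLF hcl hcov hcont

lemma G_late {k : ℕ} {x : X} (hx : x ∈ d.W k) {r : ℝ} (hr : (k : ℝ) + 1 < r) :
    d.G (x, r) = d.pt := by
  simp only [G]
  have hk0 : (0 : ℝ) ≤ (k : ℝ) := Nat.cast_nonneg k
  have hrpos : (0 : ℝ) < r := by linarith
  rw [if_neg (not_le.2 hrpos)]
  have hm : k + 1 < ⌈r⌉₊ := Nat.lt_ceil.2 (by push_cast; linarith)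
  obtain ⟨j, hj⟩ : ∃ j, ⌈r⌉₊ = j + 1 := ⟨⌈r⌉₊ - 1, by omega⟩
  rw [hj]
  exact d.S_done j x _ (d.theta_late hx (by omega))

end Data

theorem Data.contractible {X : Type*} [TopologicalSpace X] (d : Data X) :
    ContractibleSpace X := by
  rw [contractible_iff_id_nullhomotopic]
  refine ⟨d.pt, ?_⟩
  set H : X × I → X := fun q =>
    if (q.2 : ℝ) < 1 then d.G (q.1, (q.2 : ℝ) / (1 - (q.2 : ℝ))) else d.pt with hH
  have hHc : Continuous H := by
    rw [continuous_iff_continuousAt]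
    rintro ⟨x, t⟩
    rcases lt_or_ge (t : ℝ) 1 with ht | ht
    · have hO : IsOpen {q : X × I | (q.2 : ℝ) < 1} :=
        isOpen_Iio.preimage (continuous_subtype_val.comp continuous_snd)
      have hF : ContinuousAt (fun q : X × I => d.G (q.1, (q.2 : ℝ) / (1 - (q.2 : ℝ)))) (x, t) := by
        refine d.G_cont.continuousAt.comp ?_
        refine ContinuousAt.prodMk continuousAt_fst ?_
        refine ContinuousAt.div
          ((continuous_subtype_val.comp continuous_snd).continuousAt)
          ((continuous_const.sub (continuous_subtype_val.comp continuous_snd)).continuousAt) ?_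
        simp only
        intro hzero
        have h1 : (t : ℝ) = 1 := by linarith [sub_eq_zero.1 hzero]
        linarith
      have hev : (fun q : X × I => d.G (q.1, (q.2 : ℝ) / (1 - (q.2 : ℝ)))) =ᶠ[nhds (x, t)] H := by
        refine Filter.eventuallyEq_of_mem (hO.mem_nhds ht) ?_
        rintro ⟨y, u⟩ hu
        have hu' : (u : ℝ) < 1 := hu
        show (fun q : X × I => d.G (q.1, (q.2 : ℝ) / (1 - (q.2 : ℝ)))) (y, u) = H (y, u)
        rw [hH]
        exact (if_pos hu').symm
      exact hF.congr hev
    · have ht1 : (t : ℝ) = 1 := le_antisymm t.2.2 ht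
      obtain ⟨k, hk⟩ := d.hunion x
      set c : ℝ := ((k : ℝ) + 1) / ((k : ℝ) + 2) with hc
      have hkpos : (0 : ℝ) < (k : ℝ) + 2 := by positivity
      have hO : IsOpen (d.W k ×ˢ {u : I | c < (u : ℝ)}) :=
        (d.hopen k).prod (isOpen_Ioi.preimage continuous_subtype_val)
      have hmem : (x, t) ∈ d.W k ×ˢ {u : I | c < (u : ℝ)} := by
        refine ⟨hk, ?_⟩
        show c < (t : ℝ)
        rw [ht1, hc, div_lt_one hkpos]
        linarith
      have hconst : ∀ q ∈ d.W k ×ˢ {u : I | c < (u : ℝ)}, H q = d.pt := by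
        rintro ⟨y, u⟩ ⟨hy, hu⟩
        have hu' : c < (u : ℝ) := hu
        show (if (u : ℝ) < 1 then d.G (y, (u : ℝ) / (1 - (u : ℝ))) else d.pt) = d.pt
        split
        · rename_i hu1
          have h0 : (0 : ℝ) < 1 - (u : ℝ) := by linarith
          refine d.G_late hy ?_
          rw [lt_div_iff₀ h0]
          rw [hc, div_lt_iff₀ hkpos] at hu'
          nlinarith
        · rfl
      have hev : H =ᶠ[nhds (x, t)] (fun _ => d.pt) :=
        Filter.eventuallyEq_of_mem (hO.mem_nhds hmem) hconst
      exact (continuousAt_const (y := d.pt)).congr hev.symm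
  have hmty : (ContinuousMap.id X).Homotopic (ContinuousMap.const X d.pt) := by
    refine ⟨{ toContinuousMap := ⟨fun p => H (p.2, p.1), hHc.comp (continuous_snd.prodMk continuous_fst)⟩,
              map_zero_left := ?_, map_one_left := ?_ }⟩
    · intro x
      show H (x, 0) = x
      rw [hH]
      simp only
      rw [if_pos (by rw [coeI_zero] ; norm_num : ((0 : I) : ℝ) < 1)]
      rw [coeI_zero, zero_div]
      exact d.G_zero x
    · intro x
      show H (x, 1) = d.pt
      rw [hH]
      simp only
      rw [if_neg (by rw [coeI_one]; norm_num)]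
  exact hmty

end MUC

open MUC in
/-- **Theorem 4.** If a normal space `X` is the union of a sequence of open subsets `{Uₙ}`
with `cl(Uₙ) ⊆ Uₙ₊₁` and each `Uₙ` contracting to a point in `Uₙ₊₁`, and there exists an
open `V ⊆ X` contracting to a point `p₀ ∈ V` in `X` fixing `p₀`, then `X` is contractible. -/
theorem monotone_union_contractible_of_locally_contractible_point
    {X : Type*} [TopologicalSpace X] [NormalSpace X]
    (U : ℕ → Set X) (hopen : ∀ n, IsOpen (U n))
    (hcl : ∀ n, closure (U n) ⊆ U (n + 1))
    (hunion : (⋃ n, U n) = Set.univ)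
    (hcontr : ∀ n, ∃ f : (U n) × I → X, Continuous f ∧
      (∀ x : U n, f (x, 0) = (x : X)) ∧
      (∃ p : X, ∀ x : U n, f (x, 1) = p) ∧
      (∀ z, f z ∈ U (n + 1)))
    (V : Set X) (hV : IsOpen V) (p₀ : X) (hp₀ : p₀ ∈ V)
    (hVcontr : ∃ f : V × I → X, Continuous f ∧
      (∀ x : V, f (x, 0) = (x : X)) ∧
      (∀ x : V, f (x, 1) = p₀) ∧
      (∀ t : I, f (⟨p₀, hp₀⟩, t) = p₀)) :
    ContractibleSpace X := by
  classical
  have hmemu : p₀ ∈ ⋃ n, U n := by rw [hunion]; exact Set.mem_univ p₀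
  obtain ⟨N, hN⟩ := Set.mem_iUnion.1 hmemu
  have hUmono : ∀ m n : ℕ, m ≤ n → U m ⊆ U n := by
    intro m n hmn
    induction n with
    | zero =>
      have : m = 0 := Nat.le_zero.1 hmn
      simp [this]
    | succ k ih =>
      rcases Nat.lt_or_ge m (k + 1) with h' | h'
      · exact (ih (Nat.lt_succ_iff.1 h')).trans (subset_closure.trans (hcl k))
      · have : m = k + 1 := le_antisymm hmn h'
        simp [this]
  choose f hfc hf0 hf1ex hfW using hcontr
  choose p hf1 using hf1ex
  have hθex : ∀ n : ℕ, ∃ g : X → ℝ, Continuous g ∧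
      (∀ x ∈ closure (U (N + n)), g x = 1) ∧ (∀ x, x ∉ U (N + n + 1) → g x = 0) := by
    intro n
    obtain ⟨g, hg0, hg1, -⟩ := exists_continuous_zero_one_of_isClosed
      (s := (U (N + n + 1))ᶜ) (t := closure (U (N + n)))
      (isClosed_compl_iff.2 (hopen (N + n + 1))) isClosed_closure
      (Set.disjoint_left.2 fun {a} ha1 ha2 => ha1 (hcl (N + n) ha2))
    exact ⟨fun x => g x, g.continuous, fun x hx => hg1 hx, fun x hx => hg0 hx⟩
  choose gθ hgc hg1 hg0 using hθex
  set d : MUC.Data X :=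
    { W := fun n => U (N + n)
      pt := p₀
      hopen := fun n => hopen _
      hcl := fun n => hcl _
      hunion := fun x => by
        have : x ∈ ⋃ n, U n := by rw [hunion]; exact Set.mem_univ x
        obtain ⟨m, hm⟩ := Set.mem_iUnion.1 this
        exact ⟨m, hUmono m (N + m) (Nat.le_add_left m N) hm⟩
      hpt := hN
      f := fun n => f (N + n)
      hfc := fun n => hfc _
      hf0 := fun n => hf0 _
      p := fun n => p (N + n)
      hf1 := fun n => hf1 _
      hfW := fun n => hfW _
      θ := fun n => match n with
        | 0 => fun _ => 0
        | n + 1 => gθ n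
      hθc := fun n => match n with
        | 0 => continuous_const
        | n + 1 => hgc n
      hθz := fun _ => rfl
      hθ1 := fun n x hx => hg1 n x hx
      hθout := fun n x hx => hg0 n x hx }
  exact d.contractible
end

section
/- If X is an absolute neighborhood retract (for metric spaces) that is the union of a sequence of open subsets U_1, U_2, ... such that for each n ≥ 1, cl(U_n) ⊆ U_{n+1} and U_n contracts to a point in U_{n+1}, then X is contractible. -/
open unitInterval

/-- A metrizable space `X` is an *absolute neighborhood retract* (ANR) if every continuous
map into `X` from a closed subset `A` of a metrizable space `Y` extends continuously over
some open neighborhood of `A` in `Y`. -/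
def IsANR (X : Type) [TopologicalSpace X] : Prop :=
  TopologicalSpace.MetrizableSpace X ∧
  ∀ (Y : Type) (_ : TopologicalSpace Y), TopologicalSpace.MetrizableSpace Y →
    ∀ (A : Set Y), IsClosed A → ∀ f : A → X, Continuous f →
      ∃ O : Set Y, IsOpen O ∧ A ⊆ O ∧
        ∃ g : O → X, Continuous g ∧ ∀ (x : Y) (hA : x ∈ A) (hO : x ∈ O),
          g ⟨x, hO⟩ = f ⟨x, hA⟩

section AuxContraction

open Set

set_option linter.unusedSectionVars false

variable {X : Type} [TopologicalSpace X] (U : ℕ → Set X)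
  (f : ∀ n, (U n) × I → X) (μ : ℕ → X → ℝ)

open Classical in
noncomputable def auxTheta (n : ℕ) (pr : X × ℝ) : X :=
  if h : pr.1 ∈ U (2 * n + 1) then
    f (2 * n + 1) (⟨pr.1, h⟩, Set.projIcc (0 : ℝ) 1 zero_le_one (μ n pr.1 * pr.2))
  else pr.1

/-- Iterated stage maps: position of a point after `n` full stages. -/
noncomputable def auxG : ℕ → X → X
  | 0 => fun x => x
  | n + 1 => fun x => auxTheta U f μ n (auxG n x, 1)

/-- The global "infinite concatenation" homotopy on `X × ℝ`. -/
noncomputable def auxH (pr : X × ℝ) : X :=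
  auxTheta U f μ (⌊pr.2⌋₊) (auxG U f μ (⌊pr.2⌋₊) pr.1, pr.2 - (⌊pr.2⌋₊ : ℝ))

lemma projIcc_nonpos {r : ℝ} (hr : r ≤ 0) :
    Set.projIcc (0 : ℝ) 1 zero_le_one r = 0 := by
  rw [Set.projIcc_of_le_left _ hr]; rfl

lemma projIcc_one_le {r : ℝ} (hr : 1 ≤ r) :
    Set.projIcc (0 : ℝ) 1 zero_le_one r = 1 := by
  rw [Set.projIcc_of_right_le _ hr]; rfl

variable {U f μ}

lemma auxTheta_nonpos (hμnn : ∀ n y, 0 ≤ μ n y)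
    (h0 : ∀ n (x : (U n)), f n (x, 0) = (x : X))
    (n : ℕ) {y : X} {s : ℝ} (hs : s ≤ 0) : auxTheta U f μ n (y, s) = y := by
  unfold auxTheta
  by_cases h : y ∈ U (2 * n + 1)
  · rw [dif_pos h]
    have : μ n y * s ≤ 0 := mul_nonpos_iff.2 (Or.inl ⟨hμnn n y, hs⟩)
    rw [projIcc_nonpos this, h0]
  · rw [dif_neg h]

lemma auxTheta_zero (hμnn : ∀ n y, 0 ≤ μ n y)
    (h0 : ∀ n (x : (U n)), f n (x, 0) = (x : X))
    (n : ℕ) (y : X) : auxTheta U f μ n (y, 0) = y :=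
  auxTheta_nonpos hμnn h0 n le_rfl

lemma auxTheta_mem_or (hin : ∀ n z, f n z ∈ U (n + 1)) (n : ℕ) (y : X) (s : ℝ) :
    auxTheta U f μ n (y, s) = y ∨ auxTheta U f μ n (y, s) ∈ U (2 * n + 2) := by
  unfold auxTheta
  by_cases h : y ∈ U (2 * n + 1)
  · rw [dif_pos h]; exact Or.inr (hin _ _)
  · rw [dif_neg h]; exact Or.inl rfl

/-- If the point lies in the trigger set `closure (U (2n))`, stage `n` contracts it fully. -/
lemma auxTheta_trigger (hcl : ∀ n, closure (U n) ⊆ U (n + 1))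
    (hμ1 : ∀ n y, y ∈ closure (U (2 * n)) → μ n y = 1)
    (p : ℕ → X) (hp : ∀ n (x : (U n)), f n (x, 1) = p n)
    (n : ℕ) {y : X} (hy : y ∈ closure (U (2 * n))) :
    auxTheta U f μ n (y, 1) = p (2 * n + 1) := by
  have hmem : y ∈ U (2 * n + 1) := hcl (2 * n) hy
  unfold auxTheta
  rw [dif_pos hmem, hμ1 n y hy, one_mul, projIcc_one_le le_rfl, hp]

lemma auxG_mem_or (hcl : ∀ n, closure (U n) ⊆ U (n + 1))
    (hin : ∀ n z, f n z ∈ U (n + 1)) (n : ℕ) (x : X) :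
    auxG U f μ n x = x ∨ auxG U f μ n x ∈ U (2 * n) := by
  induction n with
  | zero => exact Or.inl rfl
  | succ n ih =>
    have hstep := auxTheta_mem_or (μ := μ) hin n (auxG U f μ n x) 1
    rcases hstep with h | h
    · rcases ih with h' | h'
      · exact Or.inl (by simp only [auxG]; rw [h, h'])
      · refine Or.inr ?_
        simp only [auxG]; rw [h]
        have : U (2 * n) ⊆ U (2 * (n + 1)) := by
          intro z hz
          have h1 : U (2 * n) ⊆ U (2 * n + 1) := (subset_closure).trans (hcl _)
          have h2 : U (2 * n + 1) ⊆ U (2 * n + 2) := (subset_closure).trans (hcl _)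
          have : (2 : ℕ) * (n + 1) = 2 * n + 2 := by ring
          rw [this]
          exact h2 (h1 hz)
        exact this h'
    · refine Or.inr ?_
      simp only [auxG]
      have : (2 : ℕ) * (n + 1) = 2 * n + 2 := by ring
      rw [this]
      exact h

/-- Key merging lemma: any point of `closure (U (2m))` follows the universal trajectory
after stage `m`. -/
lemma auxG_merge (hcl : ∀ n, closure (U n) ⊆ U (n + 1))
    (hin : ∀ n z, f n z ∈ U (n + 1))
    (hμ1 : ∀ n y, y ∈ closure (U (2 * n)) → μ n y = 1)
    (p : ℕ → X) (hp : ∀ n (x : (U n)), f n (x, 1) = p n)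
    (m : ℕ) (x : X) (hx : x ∈ closure (U (2 * m))) :
    ∀ k, m ≤ k → auxG U f μ (k + 1) x = p (2 * k + 1) ∧ p (2 * k + 1) ∈ U (2 * k + 2) := by
  intro k hk
  induction k, hk using Nat.le_induction with
  | base =>
    have hg : auxG U f μ m x ∈ closure (U (2 * m)) := by
      rcases auxG_mem_or (μ := μ) hcl hin m x with h | h
      · rw [h]; exact hx
      · exact subset_closure h
    constructor
    · simp only [auxG]; exact auxTheta_trigger hcl hμ1 p hp m hg
    · have hmem : auxG U f μ m x ∈ U (2 * m + 1) := hcl (2 * m) hg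
      have := hin (2 * m + 1) (⟨auxG U f μ m x, hmem⟩, 1)
      rwa [hp (2 * m + 1) ⟨auxG U f μ m x, hmem⟩] at this
  | succ k hk ih =>
    obtain ⟨ih1, ih2⟩ := ih
    have hg : auxG U f μ (k + 1) x ∈ closure (U (2 * (k + 1))) := by
      rw [ih1]
      have : (2 : ℕ) * (k + 1) = 2 * k + 2 := by ring
      rw [this]
      exact subset_closure ih2
    constructor
    · have htr := auxTheta_trigger hcl hμ1 p hp (k + 1) hg
      have hrfl : auxG U f μ (k + 1 + 1) x
          = auxTheta U f μ (k + 1) (auxG U f μ (k + 1) x, 1) := rfl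
      rw [hrfl, htr]
    · have hmem : auxG U f μ (k + 1) x ∈ U (2 * (k + 1) + 1) := hcl (2 * (k + 1)) hg
      have h2 := hin (2 * (k + 1) + 1) (⟨auxG U f μ (k + 1) x, hmem⟩, 1)
      rw [hp (2 * (k + 1) + 1) ⟨auxG U f μ (k + 1) x, hmem⟩] at h2
      have e1 : (2 : ℕ) * (k + 1) + 1 = 2 * (k + 1) + 1 := rfl
      have e2 : (2 : ℕ) * (k + 1) + 2 = 2 * (k + 1) + 2 := rfl
      exact h2

lemma auxH_merge (hcl : ∀ n, closure (U n) ⊆ U (n + 1))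
    (hin : ∀ n z, f n z ∈ U (n + 1))
    (hμ1 : ∀ n y, y ∈ closure (U (2 * n)) → μ n y = 1)
    (p : ℕ → X) (hp : ∀ n (x : (U n)), f n (x, 1) = p n)
    (m m' : ℕ) (x x' : X) (hx : x ∈ closure (U (2 * m))) (hx' : x' ∈ closure (U (2 * m')))
    (t : ℝ) (ht : ((max m m' : ℕ) : ℝ) + 1 ≤ t) :
    auxH U f μ (x, t) = auxH U f μ (x', t) := by
  have hn : max m m' + 1 ≤ ⌊t⌋₊ := by
    apply Nat.le_floor
    exact_mod_cast ht
  obtain ⟨k, hk⟩ : ∃ k, ⌊t⌋₊ = k + 1 := ⟨⌊t⌋₊ - 1, by omega⟩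
  have hmk : m ≤ k := le_trans (le_max_left m m') (by omega)
  have hm'k : m' ≤ k := le_trans (le_max_right m m') (by omega)
  have h1 := (auxG_merge hcl hin hμ1 p hp m x hx k hmk).1
  have h2 := (auxG_merge hcl hin hμ1 p hp m' x' hx' k hm'k).1
  unfold auxH
  rw [hk, h1, h2]

lemma auxTheta_cont (n : ℕ)
    (hUo : IsOpen (U (2 * n + 1)))
    (hfc : Continuous (f (2 * n + 1)))
    (hμc : Continuous (μ n))
    (W : Set X) (hWcl : closure W ⊆ U (2 * n + 1))
    (hμ0 : ∀ x, x ∉ W → μ n x = 0)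
    (h0 : ∀ (x : (U (2 * n + 1))), f (2 * n + 1) (x, 0) = (x : X)) :
    Continuous (auxTheta U f μ n) := by
  rw [continuous_iff_continuousAt]
  intro q
  by_cases hq : q.1 ∈ U (2 * n + 1)
  · have hO : IsOpen {p : X × ℝ | p.1 ∈ U (2 * n + 1)} := hUo.preimage continuous_fst
    have hcO : ContinuousOn (auxTheta U f μ n) {p : X × ℝ | p.1 ∈ U (2 * n + 1)} := by
      rw [continuousOn_iff_continuous_restrict]
      have hco : Continuous (fun q : {p : X × ℝ // p.1 ∈ U (2 * n + 1)} =>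
          f (2 * n + 1) (⟨q.1.1, q.2⟩,
            Set.projIcc (0 : ℝ) 1 zero_le_one (μ n q.1.1 * q.1.2))) := by
        apply hfc.comp
        apply Continuous.prodMk
        · exact Continuous.subtype_mk (continuous_fst.comp continuous_subtype_val) _
        · exact continuous_projIcc.comp
            ((hμc.comp (continuous_fst.comp continuous_subtype_val)).mul
              (continuous_snd.comp continuous_subtype_val))
      have hre : (Set.domRestrict {p : X × ℝ | p.1 ∈ U (2 * n + 1)} (auxTheta U f μ n))
          = fun q : {p : X × ℝ // p.1 ∈ U (2 * n + 1)} =>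
            f (2 * n + 1) (⟨q.1.1, q.2⟩,
              Set.projIcc (0 : ℝ) 1 zero_le_one (μ n q.1.1 * q.1.2)) := by
        funext q
        simp only [Set.domRestrict_apply, auxTheta]
        rw [dif_pos (show (q : X × ℝ).1 ∈ U (2 * n + 1) from q.2)]
      rw [hre]
      exact hco
    exact hcO.continuousAt (hO.mem_nhds hq)
  · have hq' : q.1 ∉ closure W := fun h => hq (hWcl h)
    have hO : IsOpen {p : X × ℝ | p.1 ∉ closure W} :=
      isClosed_closure.isOpen_compl.preimage continuous_fst
    have heq : ∀ p : X × ℝ, p.1 ∉ closure W → auxTheta U f μ n p = p.1 := by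
      intro p hp
      by_cases h : p.1 ∈ U (2 * n + 1)
      · have hz : μ n p.1 = 0 := hμ0 _ (fun hw => hp (subset_closure hw))
        unfold auxTheta
        rw [dif_pos h, hz, zero_mul, projIcc_nonpos le_rfl, h0]
      · unfold auxTheta; rw [dif_neg h]
    refine ContinuousAt.congr continuous_fst.continuousAt ?_
    filter_upwards [hO.mem_nhds hq'] with p hp
    exact (heq p hp).symm

lemma auxG_cont (hΘ : ∀ n, Continuous (auxTheta U f μ n)) (n : ℕ) :
    Continuous (auxG U f μ n) := by
  induction n with
  | zero => exact continuous_id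
  | succ n ih => exact (hΘ n).comp (ih.prodMk continuous_const)

lemma auxH_cont (hΘ : ∀ n, Continuous (auxTheta U f μ n))
    (hμnn : ∀ n y, 0 ≤ μ n y)
    (h0 : ∀ n (x : (U n)), f n (x, 0) = (x : X)) :
    Continuous (auxH U f μ) := by
  have hg : ∀ n, Continuous (auxG U f μ n) := auxG_cont hΘ
  set S : ℕ → Set (X × ℝ) := fun k =>
    Nat.casesOn k (univ ×ˢ Iic (0 : ℝ)) (fun j => univ ×ˢ Icc (j : ℝ) (j + 1)) with hS
  have hcov : ⋃ k, S k = univ := by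
    apply eq_univ_of_forall
    intro q
    rcases le_or_gt q.2 0 with h | h
    · exact Set.mem_iUnion.2 ⟨0, ⟨mem_univ _, h⟩⟩
    · refine Set.mem_iUnion.2 ⟨⌊q.2⌋₊ + 1, ⟨mem_univ _, ?_, ?_⟩⟩
      · exact Nat.floor_le h.le
      · exact (Nat.lt_floor_add_one _).le
  have hclosed : ∀ k, IsClosed (S k) := by
    intro k
    cases k with
    | zero => exact isClosed_univ.prod isClosed_Iic
    | succ j => exact isClosed_univ.prod isClosed_Icc
  have hlf : LocallyFinite S := by
    intro q
    refine ⟨univ ×ˢ Ioo (q.2 - 1) (q.2 + 1),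
      prod_mem_nhds Filter.univ_mem (Ioo_mem_nhds (by linarith) (by linarith)), ?_⟩
    apply Set.Finite.subset (Set.finite_Iic (⌊q.2⌋₊ + 2))
    rintro k ⟨r, hrS, hrV⟩
    cases k with
    | zero => exact Nat.zero_le _
    | succ j =>
      have h1 : (j : ℝ) ≤ r.2 := hrS.2.1
      have h2 : r.2 < q.2 + 1 := hrV.2.2
      have h3 : q.2 < ⌊q.2⌋₊ + 1 := Nat.lt_floor_add_one _
      have : (j : ℝ) < (⌊q.2⌋₊ : ℝ) + 2 := by linarith
      have hj : j < ⌊q.2⌋₊ + 2 := by exact_mod_cast this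
      simp only [Set.mem_Iic]
      omega
  have hcont : ∀ k, ContinuousOn (auxH U f μ) (S k) := by
    intro k
    cases k with
    | zero =>
      refine ContinuousOn.congr continuous_fst.continuousOn ?_
      rintro ⟨x, t⟩ ⟨-, (ht : t ≤ 0)⟩
      have hfl : ⌊t⌋₊ = 0 := Nat.floor_eq_zero.2 (lt_of_le_of_lt ht one_pos)
      unfold auxH
      simp only [hfl, Nat.cast_zero, sub_zero]
      exact auxTheta_nonpos hμnn h0 0 ht
    | succ j =>
      have hcomp : Continuous (fun p : X × ℝ => auxTheta U f μ j (auxG U f μ j p.1, p.2 - (j : ℝ))) :=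
        (hΘ j).comp (((hg j).comp continuous_fst).prodMk (continuous_snd.sub continuous_const))
      refine ContinuousOn.congr hcomp.continuousOn ?_
      rintro ⟨x, t⟩ ⟨-, hmem⟩
      obtain ⟨h1, h2⟩ : (j : ℝ) ≤ t ∧ t ≤ (j : ℝ) + 1 := hmem
      rcases lt_or_eq_of_le h2 with hlt | heq
      · have hfl : ⌊t⌋₊ = j := by
          rw [Nat.floor_eq_iff (le_trans (Nat.cast_nonneg j) h1)]
          exact ⟨h1, hlt⟩
        unfold auxH
        rw [hfl]
      · have heq' : t = ((j + 1 : ℕ) : ℝ) := by push_cast; linarith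
        have hfl : ⌊t⌋₊ = j + 1 := by rw [heq', Nat.floor_natCast]
        unfold auxH
        rw [hfl, heq']
        have hz : ((j + 1 : ℕ) : ℝ) - ((j + 1 : ℕ) : ℝ) = 0 := sub_self _
        rw [hz, auxTheta_zero hμnn h0]
        have hone : ((j + 1 : ℕ) : ℝ) - (j : ℝ) = 1 := by push_cast; ring
        show auxG U f μ (j + 1) x
          = auxTheta U f μ j (auxG U f μ j x, ((j + 1 : ℕ) : ℝ) - (j : ℝ))
        rw [hone]
        rfl
  exact hlf.continuous hcov hclosed hcont

lemma auxH_nonpos (hμnn : ∀ n y, 0 ≤ μ n y)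
    (h0 : ∀ n (x : (U n)), f n (x, 0) = (x : X))
    (x : X) {t : ℝ} (ht : t ≤ 0) : auxH U f μ (x, t) = x := by
  have hfl : ⌊t⌋₊ = 0 := Nat.floor_eq_zero.2 (lt_of_le_of_lt ht one_pos)
  unfold auxH
  simp only [hfl, Nat.cast_zero, sub_zero]
  exact auxTheta_nonpos hμnn h0 0 ht

end AuxContraction

open Set Filter Topology

/-- **Corollary 6.** If an ANR `X` is the union of a sequence of open subsets `{Uₙ}` such
that for each `n`, `cl(Uₙ) ⊆ Uₙ₊₁` and `Uₙ` contracts to a point in `Uₙ₊₁`, then `X` is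
contractible. -/
theorem anr_monotone_union_contractible
    {X : Type} [TopologicalSpace X] (hX : IsANR X)
    (U : ℕ → Set X) (hopen : ∀ n, IsOpen (U n))
    (hcl : ∀ n, closure (U n) ⊆ U (n + 1))
    (hunion : (⋃ n, U n) = Set.univ)
    (hcontr : ∀ n, ∃ f : (U n) × I → X, Continuous f ∧
      (∀ x : U n, f (x, 0) = (x : X)) ∧
      (∃ p : X, ∀ x : U n, f (x, 1) = p) ∧
      (∀ z, f z ∈ U (n + 1))) :
    ContractibleSpace X := by
  classical
  obtain ⟨hmetr, -⟩ := hX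
  haveI := hmetr
  haveI : NormalSpace X := by
    letI := TopologicalSpace.metrizableSpaceMetric X
    infer_instance
  have hcontr' : ∀ n, ∃ f : (U n) × I → X, ∃ q : X, Continuous f ∧
      (∀ x : U n, f (x, 0) = (x : X)) ∧ (∀ x : U n, f (x, 1) = q) ∧
      (∀ z, f z ∈ U (n + 1)) := by
    intro n
    obtain ⟨f, hc, h0, ⟨q, hq⟩, hin⟩ := hcontr n
    exact ⟨f, q, hc, h0, hq, hin⟩
  choose F p hFc hF0 hFp hFin using hcontr'
  have hUsub : ∀ n, U n ⊆ U (n + 1) := fun n => subset_closure.trans (hcl n)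
  have hUmono : ∀ {a b : ℕ}, a ≤ b → U a ⊆ U b := by
    intro a b hab
    induction b, hab using Nat.le_induction with
    | base => exact subset_rfl
    | succ b hb ih => exact ih.trans (hUsub b)
  -- buffer open sets and Urysohn functions for the stage maps
  have hWex : ∀ n, ∃ Wn, IsOpen Wn ∧ closure (U (2 * n)) ⊆ Wn ∧ closure Wn ⊆ U (2 * n + 1) :=
    fun n => normal_exists_closure_subset isClosed_closure (hopen (2 * n + 1)) (hcl (2 * n))
  choose W hWo hWsub hWcl using hWex
  have hμex : ∀ n, ∃ m : C(X, ℝ), Set.EqOn m 0 (W n)ᶜ ∧ Set.EqOn m 1 (closure (U (2 * n))) ∧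
      ∀ x, m x ∈ Set.Icc (0 : ℝ) 1 := by
    intro n
    refine exists_continuous_zero_one_of_isClosed (hWo n).isClosed_compl isClosed_closure ?_
    rw [Set.disjoint_left]
    intro a ha ha'
    exact ha (hWsub n ha')
  choose ν hν0 hν1 hν01 using hμex
  set μ : ℕ → X → ℝ := fun n x => ν n x with hμdef
  have hμnn : ∀ n y, 0 ≤ μ n y := fun n y => (hν01 n y).1
  have hμ1 : ∀ n y, y ∈ closure (U (2 * n)) → μ n y = 1 := by
    intro n y hy
    have := hν1 n hy
    simpa using this
  have hμ0 : ∀ n x, x ∉ W n → μ n x = 0 := by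
    intro n x hx
    have := hν0 n (by simpa using hx)
    simpa using this
  have hΘ : ∀ n, Continuous (auxTheta U F μ n) := fun n =>
    auxTheta_cont n (hopen _) (hFc _) (ν n).continuous (W n) (hWcl n) (hμ0 n) (hF0 _)
  have hHc : Continuous (auxH U F μ) := auxH_cont hΘ hμnn hF0
  -- the index of the first even-indexed set containing a point
  have hex : ∀ x : X, ∃ m, x ∈ U (2 * m) := by
    intro x
    have hx : x ∈ ⋃ n, U n := by rw [hunion]; trivial
    obtain ⟨n, hn⟩ := Set.mem_iUnion.1 hx
    exact ⟨n, hUmono (by omega) hn⟩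
  let M : X → ℕ := fun x => Nat.find (hex x)
  have hM : ∀ x, x ∈ U (2 * M x) := fun x => Nat.find_spec (hex x)
  have hMmin : ∀ x k, k < M x → x ∉ U (2 * k) := fun x k hk => Nat.find_min (hex x) hk
  set xs : X := p 0 with hxs
  set ms : ℕ := M xs with hms
  -- Urysohn family for the entry-time function sg
  have hgex : ∀ k, ∃ gk : C(X, ℝ), Set.EqOn gk 0 (closure (U (2 * k))) ∧
      Set.EqOn gk 1 (U (2 * k + 2))ᶜ ∧ ∀ x, gk x ∈ Set.Icc (0 : ℝ) 1 := by
    intro k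
    refine exists_continuous_zero_one_of_isClosed isClosed_closure
      (hopen (2 * k + 2)).isClosed_compl ?_
    rw [Set.disjoint_left]
    intro a ha ha'
    exact ha' (hUsub _ (hcl (2 * k) ha))
  choose g hg0 hg1 hg01 using hgex
  set sg : X → ℝ := fun x => (ms : ℝ) + 2 + ∑' k, g k x with hsgdef
  have hgnn : ∀ x k, 0 ≤ g k x := fun x k => (hg01 k x).1
  have hgvan : ∀ x k, M x ≤ k → g k x = 0 := by
    intro x k hk
    exact hg0 k (subset_closure (hUmono (by omega) (hM x)))
  have hsummable : ∀ x, Summable fun k => g k x := by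
    intro x
    apply summable_of_ne_finset_zero (s := Finset.range (M x))
    intro k hk
    exact hgvan x k (by simpa [Finset.mem_range, not_lt] using hk)
  have hsgcont : Continuous sg := by
    rw [continuous_iff_continuousAt]
    intro x
    have hnb : U (2 * M x) ∈ 𝓝 x := (hopen _).mem_nhds (hM x)
    have hev : sg =ᶠ[𝓝 x] fun y => (ms : ℝ) + 2 + ∑ k ∈ Finset.range (M x), g k y := by
      filter_upwards [hnb] with y hy
      have hts : ∑' k, g k y = ∑ k ∈ Finset.range (M x), g k y := by
        apply tsum_eq_sum
        intro k hk
        have hk' : M x ≤ k := by simpa [Finset.mem_range, not_lt] using hk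
        exact hg0 k (subset_closure (hUmono (by omega) hy))
      simp only [hsgdef, hts]
    have hca : ContinuousAt (fun y => (ms : ℝ) + 2 + ∑ k ∈ Finset.range (M x), g k y) x :=
      (continuous_const.add (continuous_finset_sum _ fun k _ => (g k).continuous)).continuousAt
    exact hca.congr hev.symm
  have hsgge : ∀ x, ((max (M x) ms : ℕ) : ℝ) + 1 ≤ sg x := by
    intro x
    have htnn : (0 : ℝ) ≤ ∑' k, g k x := tsum_nonneg (hgnn x)
    rcases Nat.eq_zero_or_pos (M x) with h0 | hpos
    · have hmax : max (M x) ms = ms := by rw [h0]; exact max_eq_right (Nat.zero_le ms)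
      rw [hmax]
      simp only [hsgdef]
      linarith
    · obtain ⟨m, hm⟩ : ∃ m, M x = m + 1 := ⟨M x - 1, by omega⟩
      have hones : ∀ k ∈ Finset.range m, g k x = 1 := by
        intro k hk
        have hk' : k + 1 < M x := by
          have := Finset.mem_range.1 hk
          omega
        have hx' : x ∉ U (2 * (k + 1)) := hMmin x (k + 1) hk'
        refine hg1 k ?_
        intro hc
        apply hx'
        have h22 : (2 : ℕ) * (k + 1) = 2 * k + 2 := by ring
        rw [h22]
        exact hc
      have hsum : ∑ k ∈ Finset.range m, g k x = (m : ℝ) := by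
        rw [Finset.sum_congr rfl hones]
        simp
      have hle : ∑ k ∈ Finset.range m, g k x ≤ ∑' k, g k x :=
        Summable.sum_le_tsum _ (fun k _ => hgnn x k) (hsummable x)
      have hmax : ((max (M x) ms : ℕ) : ℝ) ≤ (M x : ℝ) + (ms : ℝ) := by
        have h1 : max (M x) ms ≤ M x + ms := max_le (Nat.le_add_right _ _) (Nat.le_add_left _ _)
        exact_mod_cast h1
      have hMx : (M x : ℝ) = (m : ℝ) + 1 := by rw [hm]; push_cast; ring
      simp only [hsgdef]
      rw [hsum] at hle
      linarith
  have hsgge2 : ∀ x, ((ms : ℝ) + 2) ≤ sg x := by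
    intro x
    have htnn : (0 : ℝ) ≤ ∑' k, g k x := tsum_nonneg (hgnn x)
    simp only [hsgdef]
    linarith
  have hmerge : ∀ x t, ((max (M x) ms : ℕ) : ℝ) + 1 ≤ t →
      auxH U F μ (x, t) = auxH U F μ (xs, t) :=
    fun x t ht => auxH_merge hcl hFin hμ1 p hFp (M x) ms x xs
      (subset_closure (hM x)) (subset_closure (hM xs)) t ht
  -- the two homotopies
  set Φfun : X → X := fun x => auxH U F μ (xs, sg x) with hΦdef
  have hΦc : Continuous Φfun := hHc.comp (continuous_const.prodMk hsgcont)
  have hK : Continuous fun q : I × X => auxH U F μ (q.2, (q.1 : ℝ) * sg q.2) :=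
    hHc.comp (continuous_snd.prodMk
      ((continuous_subtype_val.comp continuous_fst).mul (hsgcont.comp continuous_snd)))
  have hL : Continuous fun q : I × X =>
      auxH U F μ (xs, (1 - (q.1 : ℝ)) * sg q.2 + (q.1 : ℝ) * ((ms : ℝ) + 2)) :=
    hHc.comp (continuous_const.prodMk
      (((continuous_const.sub (continuous_subtype_val.comp continuous_fst)).mul
        (hsgcont.comp continuous_snd)).add
        ((continuous_subtype_val.comp continuous_fst).mul continuous_const)))
  have h1 : ContinuousMap.Homotopy (ContinuousMap.id X) ⟨Φfun, hΦc⟩ :=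
    { toFun := fun q => auxH U F μ (q.2, (q.1 : ℝ) * sg q.2)
      continuous_toFun := hK
      map_zero_left := by
        intro x
        show auxH U F μ (x, ((0 : I) : ℝ) * sg x) = x
        have hz : ((0 : I) : ℝ) * sg x = 0 := by norm_num
        rw [hz]
        exact auxH_nonpos hμnn hF0 x le_rfl
      map_one_left := by
        intro x
        show auxH U F μ (x, ((1 : I) : ℝ) * sg x) = Φfun x
        have ho : ((1 : I) : ℝ) * sg x = sg x := by norm_num
        rw [ho]
        exact hmerge x (sg x) (hsgge x) }
  have h2 : ContinuousMap.Homotopy ⟨Φfun, hΦc⟩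
      (ContinuousMap.const X (auxH U F μ (xs, (ms : ℝ) + 2))) :=
    { toFun := fun q => auxH U F μ (xs, (1 - (q.1 : ℝ)) * sg q.2 + (q.1 : ℝ) * ((ms : ℝ) + 2))
      continuous_toFun := hL
      map_zero_left := by
        intro x
        show auxH U F μ (xs, (1 - ((0 : I) : ℝ)) * sg x + ((0 : I) : ℝ) * ((ms : ℝ) + 2))
          = Φfun x
        norm_num
        rfl
      map_one_left := by
        intro x
        show auxH U F μ (xs, (1 - ((1 : I) : ℝ)) * sg x + ((1 : I) : ℝ) * ((ms : ℝ) + 2))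
          = auxH U F μ (xs, (ms : ℝ) + 2)
        norm_num }
  rw [contractible_iff_id_nullhomotopic]
  exact ⟨auxH U F μ (xs, (ms : ℝ) + 2), ⟨h1.trans h2⟩⟩
end

section
/- Suppose h : X × [0,∞) → X is continuous with h(x,0) = x for all x, and A ⊆ X × [1,∞) is a set such that h is constant on each horizontal slice of A (i.e., h(A ∩ (X × {t})) is a single point for each t ≥ 1). If σ : X → [3,∞) is continuous with graph contained in A, and there exists q ∈ X with {q} × [3,∞) ⊆ A, then the map ψ(x) = h(x, σ(x)) satisfies ψ = τ ∘ σ where τ(t) = h(q,t), and ψ is homotopic to the identity of X; consequently X is contractible. -/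
open unitInterval

/-- If `h : X × [0,∞) → X` starts at the identity and is constant on each horizontal
slice of a set `A ⊆ X × [1,∞)`, and `σ : X → [3,∞)` is continuous with graph in `A`,
and `{q} × [3,∞) ⊆ A`, then `ψ(x) = h(x, σ(x))` factors as `τ ∘ σ` with `τ(t) = h(q,t)`,
`ψ` is homotopic to `id_X`, and `X` is contractible. -/
theorem contractible_of_slicewise_constant_homotopy
    {X : Type*} [TopologicalSpace X]
    (h : X × (Set.Ici (0 : ℝ)) → X) (hh : Continuous h)
    (hh0 : ∀ x : X, h (x, ⟨0, Set.self_mem_Ici⟩) = x)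
    (A : Set (X × ℝ)) (hA : A ⊆ Set.univ ×ˢ Set.Ici (1 : ℝ))
    (hslice : ∀ (t : ℝ) (ht : 1 ≤ t), ∀ x y : X, (x, t) ∈ A → (y, t) ∈ A →
      h (x, ⟨t, le_trans zero_le_one ht⟩) = h (y, ⟨t, le_trans zero_le_one ht⟩))
    (sig : X → ℝ) (hsig : Continuous sig) (hsig3 : ∀ x, 3 ≤ sig x)
    (hgraph : ∀ x, (x, sig x) ∈ A)
    (q : X) (hq : ∀ t : ℝ, 3 ≤ t → (q, t) ∈ A) :
    (∀ x : X, h (x, ⟨sig x, le_trans (by norm_num) (hsig3 x)⟩) =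
      h (q, ⟨sig x, le_trans (by norm_num) (hsig3 x)⟩)) ∧
    (∃ k : X × I → X, Continuous k ∧ (∀ x, k (x, 0) = x) ∧
      (∀ x, k (x, 1) = h (x, ⟨sig x, le_trans (by norm_num) (hsig3 x)⟩))) ∧
    ContractibleSpace X := by
  have hfac : ∀ x : X, h (x, ⟨sig x, le_trans (by norm_num) (hsig3 x)⟩) =
      h (q, ⟨sig x, le_trans (by norm_num) (hsig3 x)⟩) := fun x =>
    hslice (sig x) (le_trans (by norm_num) (hsig3 x)) x q (hgraph x) (hq _ (hsig3 x))
  have hnn : ∀ (x : X) (t : I), (0:ℝ) ≤ sig x * (t:ℝ) :=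
    fun x t => mul_nonneg (le_trans (by norm_num) (hsig3 x)) t.2.1
  -- the homotopy from id to ψ
  set k : X × I → X := fun p => h (p.1, ⟨sig p.1 * (p.2:ℝ), hnn p.1 p.2⟩) with hk
  have hkc : Continuous k := by
    apply hh.comp
    refine continuous_fst.prodMk (Continuous.subtype_mk ?_ _)
    exact ((hsig.comp continuous_fst).mul (continuous_subtype_val.comp continuous_snd))
  have hk0 : ∀ x, k (x, 0) = x := by
    intro x
    simp only [hk, Set.Icc.coe_zero, mul_zero]
    exact hh0 x
  have hk1 : ∀ x, k (x, 1) = h (x, ⟨sig x, le_trans (by norm_num) (hsig3 x)⟩) := by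
    intro x
    simp [hk]
  refine ⟨hfac, ⟨k, hkc, hk0, hk1⟩, ?_⟩
  -- contractibility
  rw [contractible_iff_id_nullhomotopic]
  refine ⟨h (q, ⟨3, by norm_num⟩), ?_⟩
  have H1 : (ContinuousMap.id X).Homotopic
      ⟨fun x => h (x, ⟨sig x, le_trans (by norm_num) (hsig3 x)⟩),
        hh.comp (continuous_id.prodMk (hsig.subtype_mk _))⟩ := by
    refine ⟨⟨⟨fun p => k (p.2, p.1), hkc.comp (continuous_snd.prodMk continuous_fst)⟩,
      fun x => hk0 x, fun x => hk1 x⟩⟩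
  have H2 : (ContinuousMap.Homotopic
      (⟨fun x => h (x, ⟨sig x, le_trans (by norm_num) (hsig3 x)⟩),
        hh.comp (continuous_id.prodMk (hsig.subtype_mk _))⟩ : C(X, X))
      ⟨fun _ => h (q, ⟨3, by norm_num⟩), continuous_const⟩) := by
    have hnn2 : ∀ (x : X) (t : I), (0:ℝ) ≤ sig x * (1 - (t:ℝ)) + 3 * (t:ℝ) := by
      intro x t
      have h1 := t.2.1
      have h2 := t.2.2
      nlinarith [hsig3 x]
    refine ⟨⟨⟨fun p => h (q, ⟨sig p.2 * (1 - (p.1:ℝ)) + 3 * (p.1:ℝ), hnn2 p.2 p.1⟩), ?_⟩,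
      ?_, ?_⟩⟩
    · apply hh.comp
      refine continuous_const.prodMk (Continuous.subtype_mk ?_ _)
      fun_prop
    · intro x
      simp only [ContinuousMap.coe_mk]
      rw [hfac x]
      norm_num
    · intro x
      simp only [ContinuousMap.coe_mk]
      norm_num
  exact H1.trans H2
end

section
/- There exists a contractible metric space X and a point p ∈ X such that X cannot be contracted to p fixing p; that is, there is no homotopy f : X × [0,1] → X with f(x,0) = x, f(x,1) = p for all x, and f(p,t) = p for all t. (For example, the line of Cantor fans with p any cone vertex fails to contract fixing certain points.) -/
open unitInterval

/-- The teeth positions of the comb space: `0` and `1/(n+1)` for `n : ℕ`. -/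
def combTeeth : Set ℝ := insert 0 (Set.range fun n : ℕ => (1:ℝ)/(n+1))

/-- The comb space. -/
def comb : Set (ℝ × ℝ) :=
  {q | (q.1 ∈ combTeeth ∨ q.2 = 0) ∧ q.1 ∈ Set.Icc (0:ℝ) 1 ∧ q.2 ∈ Set.Icc (0:ℝ) 1}

lemma comb_origin_mem : ((0:ℝ), (0:ℝ)) ∈ comb := by
  refine ⟨Or.inl (Set.mem_insert _ _), ?_, ?_⟩ <;> constructor <;> norm_num

lemma comb_p_mem : ((0:ℝ), (1:ℝ)) ∈ comb := by
  refine ⟨Or.inl (Set.mem_insert _ _), ?_, ?_⟩ <;> constructor <;> norm_num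

lemma comb_q_mem (n : ℕ) : ((1:ℝ)/(n+1), (1:ℝ)) ∈ comb := by
  have h1 : (0:ℝ) < (n:ℝ) + 1 := by positivity
  refine ⟨Or.inl (Set.mem_insert_of_mem _ ⟨n, rfl⟩), ⟨by positivity, ?_⟩, by norm_num⟩
  rw [div_le_one h1]; linarith

/-- The contracting homotopy of the comb space (valued in the plane). -/
noncomputable def combH (z : I × ↥comb) : ℝ × ℝ :=
  if (z.1 : ℝ) ≤ 1/2 then ((z.2 : ℝ × ℝ).1, (z.2 : ℝ × ℝ).2 * (1 - 2*(z.1:ℝ)))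
  else ((z.2 : ℝ × ℝ).1 * (2 - 2*(z.1:ℝ)), 0)

lemma combH_mem (z : I × ↥comb) : combH z ∈ comb := by
  obtain ⟨t, x⟩ := z
  have ht0 : (0:ℝ) ≤ t := t.2.1
  have ht1 : (t:ℝ) ≤ 1 := t.2.2
  obtain ⟨hd, ⟨hx0, hx1⟩, hy0, hy1⟩ := x.2
  unfold combH
  dsimp only
  split_ifs with h
  · refine ⟨?_, ⟨hx0, hx1⟩, ?_, ?_⟩
    · rcases hd with hd | hd
      · exact Or.inl hd
      · exact Or.inr (by rw [hd, zero_mul])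
    · have : (0:ℝ) ≤ 1 - 2*(t:ℝ) := by linarith
      positivity
    · calc (x : ℝ × ℝ).2 * (1 - 2*(t:ℝ)) ≤ 1 * 1 := by
            apply mul_le_mul hy1 (by linarith) (by linarith) zero_le_one
        _ = 1 := one_mul 1
  · push_neg at h
    refine ⟨Or.inr rfl, ⟨?_, ?_⟩, by norm_num⟩
    · have : (0:ℝ) ≤ 2 - 2*(t:ℝ) := by linarith
      positivity
    · calc (x : ℝ × ℝ).1 * (2 - 2*(t:ℝ)) ≤ 1 * 1 := by
            apply mul_le_mul hx1 (by linarith) (by linarith) zero_le_one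
        _ = 1 := one_mul 1

lemma combH_cont : Continuous combH := by
  apply Continuous.if_le
  · fun_prop
  · fun_prop
  · fun_prop
  · fun_prop
  · intro z hz
    rw [hz]
    norm_num

lemma comb_contractible : ContractibleSpace comb := by
  rw [contractible_iff_id_nullhomotopic]
  refine ⟨⟨((0:ℝ),(0:ℝ)), comb_origin_mem⟩, ⟨?_⟩⟩
  refine
    { toFun := fun z => ⟨combH z, combH_mem z⟩
      continuous_toFun := combH_cont.subtype_mk _
      map_zero_left := ?_
      map_one_left := ?_ }
  · intro x
    apply Subtype.ext
    simp [combH]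
  · intro x
    apply Subtype.ext
    simp only [combH]
    rw [if_neg (by norm_num)]
    norm_num

/-- There is a contractible (metric) space `X` — a subspace of the plane — and a point
`p ∈ X` such that `X` cannot be contracted to `p` fixing `p`. -/
theorem exists_contractible_space_not_contractible_fixing_point :
    ∃ (X : Set (ℝ × ℝ)) (p : X), ContractibleSpace X ∧
      ¬ ∃ f : X × I → X, Continuous f ∧
          (∀ x : X, f (x, 0) = x) ∧
          (∀ x : X, f (x, 1) = p) ∧
          (∀ t : I, f (p, t) = p) := by
  classical
  refine ⟨comb, ⟨((0:ℝ),(1:ℝ)), comb_p_mem⟩, comb_contractible, ?_⟩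
  rintro ⟨f, hf, h0, h1, hp⟩
  set p : ↥comb := ⟨((0:ℝ),(1:ℝ)), comb_p_mem⟩ with hpdef
  -- tube lemma: get a uniform neighborhood of p staying near p
  have hU : IsOpen (f ⁻¹' Metric.ball p (1/2)) := Metric.isOpen_ball.preimage hf
  have hsub : ({p} : Set ↥comb) ×ˢ (Set.univ : Set I) ⊆ f ⁻¹' Metric.ball p (1/2) := by
    rintro ⟨x, t⟩ ⟨hx, -⟩
    rcases hx with rfl
    simp only [Set.mem_preimage, hp t, Metric.mem_ball, dist_self]
    norm_num
  obtain ⟨u, v, hu, hv, hpu, hvv, huv⟩ :=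
    generalized_tube_lemma isCompact_singleton isCompact_univ hU hsub
  obtain ⟨δ, hδ, hball⟩ := Metric.isOpen_iff.1 hu p (hpu rfl)
  obtain ⟨n, hn⟩ := exists_nat_gt (1/δ)
  have hnpos : (0:ℝ) < (n:ℝ) + 1 := by positivity
  have hdlt : (1:ℝ)/((n:ℝ)+1) < δ := by
    rw [div_lt_iff₀ hnpos]
    have h1 : 1/δ < (n:ℝ) := hn
    have h2 : 1 < δ * (n:ℝ) := by
      rw [div_lt_iff₀ hδ] at h1; linarith
    nlinarith
  set q : ↥comb := ⟨((1:ℝ)/((n:ℝ)+1), (1:ℝ)), comb_q_mem n⟩ with hqdef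
  have hqu : q ∈ u := by
    apply hball
    simp only [Metric.mem_ball, Subtype.dist_eq, hqdef, hpdef, Prod.dist_eq, Real.dist_eq]
    rw [sub_zero, sub_self, abs_zero, abs_of_pos (by positivity)]
    exact max_lt hdlt hδ
  have key : ∀ t : I, dist (f (q, t)) p < 1/2 := by
    intro t
    have : (q, t) ∈ u ×ˢ v := ⟨hqu, hvv trivial⟩
    simpa using huv this
  -- the first coordinate along the path t ↦ f (q, t)
  set g : I → ℝ := fun t => ((f (q, t) : ↥comb) : ℝ × ℝ).1 with hgdef
  have hg : Continuous g := by
    apply continuous_fst.comp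
    apply continuous_subtype_val.comp
    exact hf.comp (continuous_const.prodMk continuous_id)
  have hg1 : g 1 = 0 := by
    show ((f (q, 1) : ↥comb) : ℝ × ℝ).1 = 0
    rw [h1 q]
  have hg0 : g 0 = 1/((n:ℝ)+1) := by
    show ((f (q, 0) : ↥comb) : ℝ × ℝ).1 = 1/((n:ℝ)+1)
    rw [h0 q]
  -- the intermediate value b, strictly between 1/(n+2) and 1/(n+1)
  set b : ℝ := (1/((n:ℝ)+1) + 1/((n:ℝ)+2))/2 with hbdef
  have hlt : (1:ℝ)/((n:ℝ)+2) < 1/((n:ℝ)+1) := by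
    apply one_div_lt_one_div_of_lt hnpos; linarith
  have hb1 : (1:ℝ)/((n:ℝ)+2) < b := by rw [hbdef]; linarith
  have hb2 : b < (1:ℝ)/((n:ℝ)+1) := by rw [hbdef]; linarith
  have hbpos : (0:ℝ) < b := lt_trans (by positivity) hb1
  have hbmem : b ∈ Set.Icc (g 1) (g 0) := by
    rw [hg1, hg0]; exact ⟨le_of_lt hbpos, le_of_lt hb2⟩
  obtain ⟨t, ht⟩ := intermediate_value_univ (1:I) (0:I) hg hbmem
  -- at time t, the point f (q, t) has second coordinate > 1/2, hence first coord in combTeeth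
  have hdist := key t
  have hy : ((f (q, t) : ↥comb) : ℝ × ℝ).2 ≠ 0 := by
    rw [Subtype.dist_eq, Prod.dist_eq, hpdef] at hdist
    have h2 := lt_of_le_of_lt (le_max_right _ _) hdist
    rw [Real.dist_eq] at h2
    have := abs_lt.1 h2
    intro h
    rw [h] at this
    norm_num at this
  have hmem := (f (q, t)).2
  rcases hmem.1 with hteeth | hzero
  · -- the first coordinate is b and lies in combTeeth: contradiction
    rw [show ((f (q, t) : ↥comb) : ℝ × ℝ).1 = g t from rfl, ht] at hteeth
    rcases hteeth with hb0 | ⟨m, hm⟩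
    · rw [hb0] at hbpos; exact lt_irrefl _ hbpos
    · -- b = 1/(m+1) with 1/(n+2) < b < 1/(n+1)
      have hm' : (1:ℝ)/((m:ℝ)+1) = b := hm
      have hmpos : (0:ℝ) < (m:ℝ) + 1 := by positivity
      have hlt1 : (1:ℝ)/((m:ℝ)+1) < 1/((n:ℝ)+1) := by rw [hm']; exact hb2
      have hgt : (n:ℝ) + 1 < (m:ℝ) + 1 := (one_div_lt_one_div hmpos hnpos).1 hlt1
      have hnm : n < m := by exact_mod_cast (by linarith : (n:ℝ) < (m:ℝ))
      have hmn : (n:ℝ) + 2 ≤ (m:ℝ) + 1 := by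
        have : (n:ℝ) + 1 ≤ (m:ℝ) := by exact_mod_cast hnm
        linarith
      have hfin : (1:ℝ)/((m:ℝ)+1) ≤ 1/((n:ℝ)+2) :=
        one_div_le_one_div_of_le (by positivity) hmn
      rw [hm'] at hfin
      linarith
  · exact hy hzero
end
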